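/- arXiv:1310.7656 — 6 statements merged into one kernel-verified Lean document; each statement's English description precedes it below -/
import Mathlib

section
/- Let Λ be a finitely aligned k-graph, let c be a T-valued 2-cocycle on Λ, let Ε ⊆ FE(Λ) be satiated, let t be a relative Cuntz–Krieger (Λ,c;Ε)-family in a C*-algebra, and let I be a closed two-sided ideal of C*(t). Set H_I := {v ∈ Λ^0 : t_v ∈ I} (a hereditary Ε-saturated set). Then B_I := {F ∈ FE(Λ \ ΛH_I) : Δ(t)^F ∈ I} is a satiated subset of FE(Λ \ ΛH_I), i.e. B_I satisfies (S1)–(S4) with respect to the k-graph Λ \ ΛH_I. -/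
open scoped BigOperators

/-- A `k`-graph: a countable category with degree functor `d : Λ → ℕ^k`
satisfying the factorisation property.  Composition `comp μ ν` is only
meaningful when `s μ = r ν`. -/
structure KGraph (k : ℕ) where
  Path : Type
  countable : Countable Path
  r : Path → Path
  s : Path → Path
  d : Path → (Fin k → ℕ)
  comp : Path → Path → Path
  d_r : ∀ l, d (r l) = 0
  d_s : ∀ l, d (s l) = 0
  r_of_vertex : ∀ v, d v = 0 → r v = v
  s_of_vertex : ∀ v, d v = 0 → s v = v
  id_comp : ∀ l, comp (r l) l = l
  comp_id : ∀ l, comp l (s l) = l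
  r_comp : ∀ μ ν, s μ = r ν → r (comp μ ν) = r μ
  s_comp : ∀ μ ν, s μ = r ν → s (comp μ ν) = s ν
  d_comp : ∀ μ ν, s μ = r ν → d (comp μ ν) = d μ + d ν
  comp_assoc : ∀ l μ ν, s l = r μ → s μ = r ν →
    comp (comp l μ) ν = comp l (comp μ ν)
  factor : ∀ (l : Path) (m n : Fin k → ℕ), d l = m + n →
    ∃! p : Path × Path, d p.1 = m ∧ d p.2 = n ∧ s p.1 = r p.2 ∧ comp p.1 p.2 = l

namespace KGraph

variable {k : ℕ} (G : KGraph k)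

def IsVertex (v : G.Path) : Prop := G.d v = 0

/-- `MCE μ ν = μΛ ∩ νΛ ∩ Λ^{d μ ⊔ d ν}`. -/
def MCE (μ ν : G.Path) : Set G.Path :=
  {l | G.d l = G.d μ ⊔ G.d ν ∧
      (∃ α, G.s μ = G.r α ∧ G.comp μ α = l) ∧
      (∃ β, G.s ν = G.r β ∧ G.comp ν β = l)}

def FinitelyAligned : Prop := ∀ μ ν : G.Path, (G.MCE μ ν).Finite

/-- `Ext(μ; E) = ⋃_{ν ∈ E} {α : μα ∈ MCE(μ,ν)}`. -/
def Ext (μ : G.Path) (E : Set G.Path) : Set G.Path :=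
  {α | G.s μ = G.r α ∧ ∃ ν ∈ E, G.comp μ α ∈ G.MCE μ ν}

/-- `Ext` computed relative to a sub-`k`-graph with path set `W`. -/
def ExtIn (W : Set G.Path) (μ : G.Path) (E : Set G.Path) : Set G.Path :=
  {α | G.s μ = G.r α ∧ ∃ ν ∈ E, G.comp μ α ∈ G.MCE μ ν ∩ W}

/-- `E` is exhaustive at `v` relative to the sub-`k`-graph with path set `W`. -/
def ExhaustiveIn (W : Set G.Path) (v : G.Path) (E : Set G.Path) : Prop :=
  ∀ l ∈ W, G.r l = v → ∃ μ ∈ E, (G.MCE l μ ∩ W).Nonempty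

def Exhaustive (v : G.Path) (E : Set G.Path) : Prop := G.ExhaustiveIn Set.univ v E

/-- Membership in `FE` of the sub-`k`-graph with path set `W`. -/
def IsFEIn (W : Set G.Path) (E : Set G.Path) : Prop :=
  E.Finite ∧ E ⊆ W ∧ (∀ μ ∈ E, ¬ G.IsVertex μ) ∧
    ∃ v, G.IsVertex v ∧ (∀ μ ∈ E, G.r μ = v) ∧ G.ExhaustiveIn W v E

def IsFE (E : Set G.Path) : Prop := G.IsFEIn Set.univ E

/-- A satiated collection of finite exhaustive sets, relative to the sub-`k`-graph `W`. -/
def SatiatedIn (W : Set G.Path) (Ε : Set (Set G.Path)) : Prop :=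
  (∀ E ∈ Ε, G.IsFEIn W E) ∧
  ∀ F ∈ Ε, ∀ v, G.IsVertex v → (∀ μ ∈ F, G.r μ = v) →
    ((∀ l ∈ W, G.r l = v → l ≠ v → insert l F ∈ Ε) ∧
     (∀ l ∈ W, G.r l = v →
        (¬ ∃ μ ∈ F, ∃ μ', G.s μ = G.r μ' ∧ G.comp μ μ' = l) →
        G.ExtIn W l F ∈ Ε) ∧
     (∀ lam lam', lam ∈ F → G.s lam = G.r lam' → G.comp lam lam' ∈ F →
        lam' ≠ G.s lam → F \ {G.comp lam lam'} ∈ Ε) ∧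
     (∀ lam ∈ F, ∀ Gs ∈ Ε, (∀ μ ∈ Gs, G.r μ = G.s lam) →
        ((F \ {lam}) ∪ (G.comp lam) '' Gs) ∈ Ε))

def Satiated (Ε : Set (Set G.Path)) : Prop := G.SatiatedIn Set.univ Ε

-- auxiliary graph lemmas

lemma vertex_s (l : G.Path) : G.IsVertex (G.s l) := G.d_s l
lemma vertex_r (l : G.Path) : G.IsVertex (G.r l) := G.d_r l

lemma s_vertex {v : G.Path} (h : G.IsVertex v) : G.s v = v := G.s_of_vertex v h
lemma r_vertex {v : G.Path} (h : G.IsVertex v) : G.r v = v := G.r_of_vertex v h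

lemma comp_right_cancel {lam α β : G.Path} (hα : G.s lam = G.r α) (hβ : G.s lam = G.r β)
    (h : G.comp lam α = G.comp lam β) : α = β := by
  have hd : G.d α = G.d β := by
    have h1 := G.d_comp lam α hα
    have h2 := G.d_comp lam β hβ
    rw [h, h2] at h1
    exact (add_left_cancel h1.symm)
  have hu := G.factor (G.comp lam α) (G.d lam) (G.d α) (G.d_comp lam α hα)
  have e := hu.unique (y₁ := (lam, α)) (y₂ := (lam, β))
    ⟨rfl, rfl, hα, rfl⟩ ⟨rfl, hd.symm, hβ, h.symm⟩
  exact congrArg Prod.snd e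

lemma comp_left_unique {l μ x μ' x' : G.Path} (hμx : G.s μ = G.r x) (hc : G.comp μ x = l)
    (h' : G.s μ' = G.r x') (hc' : G.comp μ' x' = l) (hd : G.d μ = G.d μ') :
    μ = μ' ∧ x = x' := by
  have hdx : G.d x = G.d x' := by
    have h1 := G.d_comp μ x hμx
    have h2 := G.d_comp μ' x' h'
    rw [hc] at h1; rw [hc', ← hd] at h2
    rw [h1] at h2
    exact add_left_cancel h2
  have hu := G.factor l (G.d μ) (G.d x) (by rw [← hc]; exact G.d_comp μ x hμx)
  have e := hu.unique (y₁ := (μ, x)) (y₂ := (μ', x'))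
    ⟨rfl, rfl, hμx, hc⟩ ⟨hd.symm, hdx.symm, h', hc'⟩
  exact ⟨congrArg Prod.fst e, congrArg Prod.snd e⟩

lemma seg (τ : G.Path) (n : Fin k → ℕ) (hle : ∀ i, n i ≤ G.d τ i) :
    ∃ ζ η, G.d ζ = n ∧ G.s ζ = G.r η ∧ G.comp ζ η = τ := by
  obtain ⟨⟨ζ, η⟩, ⟨h1, _h2, h3, h4⟩, _⟩ :=
    G.factor τ n (fun i => G.d τ i - n i) (funext fun i => by have := hle i; simp; omega)
  exact ⟨ζ, η, h1, h3, h4⟩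

lemma mce_comm (μ ν : G.Path) : G.MCE μ ν = G.MCE ν μ := by
  ext l
  simp only [MCE, Set.mem_setOf_eq]
  constructor <;> rintro ⟨h1, h2, h3⟩ <;> exact ⟨by rw [h1, sup_comm], h3, h2⟩

lemma mce_self {l lam : G.Path} (h : l ∈ G.MCE lam lam) : l = lam := by
  obtain ⟨h1, ⟨α, hα1, hα2⟩, -⟩ := h
  have hdα : G.d α = 0 := by
    have := G.d_comp lam α hα1
    rw [hα2, h1, sup_idem] at this
    have : G.d lam = G.d lam + G.d α := this
    funext i
    have := congrFun this i
    simp at this ⊢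
    omega
  have : α = G.s lam := by rw [hα1, G.r_of_vertex α hdα]
  rw [← hα2, this, G.comp_id]

lemma mce_of_eq_deg {α β l : G.Path} (hd : G.d α = G.d β) (h : l ∈ G.MCE α β) :
    l = α ∧ l = β := by
  obtain ⟨h1, ⟨a, ha1, ha2⟩, ⟨b, hb1, hb2⟩⟩ := h
  rw [hd, sup_idem] at h1
  have hda : G.d a = 0 := by
    have h2 := G.d_comp α a ha1
    rw [ha2, h1, hd] at h2
    funext i; have := congrFun h2 i; simp at this ⊢; omega
  have hdb : G.d b = 0 := by
    have h2 := G.d_comp β b hb1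
    rw [hb2, h1] at h2
    funext i; have := congrFun h2 i; simp at this ⊢; omega
  constructor
  · rw [← ha2, show a = G.s α by rw [ha1, G.r_of_vertex a hda], G.comp_id]
  · rw [← hb2, show b = G.s β by rw [hb1, G.r_of_vertex b hdb], G.comp_id]

/-- the workhorse factorisation through an MCE -/
lemma mce_factor {μ ν β γ : G.Path} (hβ : G.s μ = G.r β) (hγ : G.s ν = G.r γ)
    (h : G.comp μ β = G.comp ν γ) :
    ∃ ρ η, ρ ∈ G.MCE μ ν ∧ G.s ρ = G.r η ∧ G.comp ρ η = G.comp μ β := by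
  have hdτμ : ∀ i, G.d μ i ≤ G.d (G.comp μ β) i := by
    intro i; rw [G.d_comp μ β hβ]; simp
  have hdτν : ∀ i, G.d ν i ≤ G.d (G.comp μ β) i := by
    intro i; rw [h, G.d_comp ν γ hγ]; simp
  obtain ⟨ζ, η, hζd, hζη, hζc⟩ := G.seg (G.comp μ β) (G.d μ ⊔ G.d ν)
    (fun i => by simpa using ⟨hdτμ i, hdτν i⟩)
  refine ⟨ζ, η, ⟨hζd, ?_, ?_⟩, hζη, hζc⟩
  · -- ζ extends μ
    obtain ⟨μ₁, α, hμ₁d, hμ₁s, hμ₁c⟩ := G.seg ζ (G.d μ)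
      (fun i => by rw [hζd]; simp)
    have hassoc : G.comp μ₁ (G.comp α η) = G.comp μ β := by
      rw [← G.comp_assoc μ₁ α η hμ₁s (by rwa [← G.s_comp μ₁ α hμ₁s, hμ₁c]), hμ₁c, hζc]
    have hcomp : G.s μ₁ = G.r (G.comp α η) := by
      rw [G.r_comp α η (by rwa [← G.s_comp μ₁ α hμ₁s, hμ₁c]), hμ₁s]
    obtain ⟨he, -⟩ := G.comp_left_unique hcomp hassoc hβ rfl hμ₁d
    exact ⟨α, by rw [← he, hμ₁s], by rw [← he, hμ₁c]⟩
  · -- ζ extends ν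
    obtain ⟨ν₁, α, hν₁d, hν₁s, hν₁c⟩ := G.seg ζ (G.d ν)
      (fun i => by rw [hζd]; simp)
    have hassoc : G.comp ν₁ (G.comp α η) = G.comp μ β := by
      rw [← G.comp_assoc ν₁ α η hν₁s (by rwa [← G.s_comp ν₁ α hν₁s, hν₁c]), hν₁c, hζc]
    have hcomp : G.s ν₁ = G.r (G.comp α η) := by
      rw [G.r_comp α η (by rwa [← G.s_comp ν₁ α hν₁s, hν₁c]), hν₁s]
    obtain ⟨he, -⟩ := G.comp_left_unique hcomp hassoc hγ (h.symm) hν₁d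
    exact ⟨α, by rw [← he, hν₁s], by rw [← he, hν₁c]⟩

end KGraph

/-- A normalised `𝕋`-valued categorical `2`-cocycle on a `k`-graph, with the
circle realised as the norm-one complex numbers. -/
structure KGraph.Cocycle {k : ℕ} (G : KGraph k) where
  c : G.Path → G.Path → ℂ
  norm_one : ∀ μ ν, G.s μ = G.r ν → ‖c μ ν‖ = 1
  cocycle : ∀ l μ ν, G.s l = G.r μ → G.s μ = G.r ν →
    c l μ * c (G.comp l μ) ν = c μ ν * c l (G.comp μ ν)
  left_id : ∀ l, c (G.r l) l = 1
  right_id : ∀ l, c l (G.s l) = 1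

namespace KGraph

variable {k : ℕ} (G : KGraph k)

section CStar

variable {A : Type*} [NonUnitalNormedRing A] [StarRing A] [CStarRing A]
  [NormedSpace ℂ A] [IsScalarTower ℂ A A] [SMulCommClass ℂ A A]
  [StarModule ℂ A] [CompleteSpace A]

/-- Toeplitz–Cuntz–Krieger `(Λ, c)`-family. -/
def IsTCK (σ : G.Cocycle) (t : G.Path → A) : Prop :=
  (∀ v, G.IsVertex v → star (t v) = t v ∧ t v * t v = t v) ∧
  (∀ v w, G.IsVertex v → G.IsVertex w → v ≠ w → t v * t w = 0) ∧
  (∀ μ ν, G.s μ = G.r ν → t μ * t ν = σ.c μ ν • t (G.comp μ ν)) ∧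
  (∀ l, star (t l) * t l = t (G.s l)) ∧
  (∀ μ ν (F : Finset G.Path), (F : Set G.Path) = G.MCE μ ν →
    (t μ * star (t μ)) * (t ν * star (t ν)) = ∑ l ∈ F, t l * star (t l))

open scoped Classical in
/-- `Δ(t)^F = ∏_{l ∈ F} (q_v - q_l)`; the factors commute for a TCK family, so the
`noncommProd` below is the product from the paper.  The product is computed in the
unitization (with a harmless prefactor `q_v`, which acts as the identity on each
factor for a TCK family with `F ⊆ vΛ`), so that the empty product is `q_v`. -/
noncomputable def Delta (t : G.Path → A) (v : G.Path) (F : Finset G.Path) : A :=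
  if h : (F : Set G.Path).Pairwise (Function.onFun Commute fun l =>
      ((t v * star (t v) - t l * star (t l) : A) : Unitization ℂ A))
  then (((t v * star (t v) : A) : Unitization ℂ A) *
      F.noncommProd (fun l => ((t v * star (t v) - t l * star (t l) : A) : Unitization ℂ A)) h).snd
  else 0

/-- Relative Cuntz–Krieger `(Λ, c; Ε)`-family. -/
def IsRelCK (σ : G.Cocycle) (Ε : Set (Set G.Path)) (t : G.Path → A) : Prop :=
  G.IsTCK σ t ∧ ∀ (F : Finset G.Path) (v : G.Path), (F : Set G.Path) ∈ Ε →
    G.IsVertex v → (∀ μ ∈ F, G.r μ = v) → G.Delta t v F = 0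

/-- Cuntz–Krieger `(Λ, c)`-family (finitely aligned case). -/
def IsCK (σ : G.Cocycle) (t : G.Path → A) : Prop :=
  G.IsRelCK σ {E | G.IsFE E} t

/-- The `C*`-subalgebra of `A` generated by a family `t`, as a subset of `A`. -/
def cstarOf (t : G.Path → A) : Set A :=
  closure (↑(NonUnitalStarAlgebra.adjoin ℂ (Set.range t)) : Set A)

end CStar

/-- Row-finite with no sources: every `vΛ^n` is finite and nonempty. -/
def RowFiniteNoSources : Prop :=
  ∀ v, G.IsVertex v → ∀ n : Fin k → ℕ,
    {l | G.r l = v ∧ G.d l = n}.Finite ∧ {l | G.r l = v ∧ G.d l = n}.Nonempty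

section CStar2

variable {A : Type*} [NonUnitalNormedRing A] [StarRing A] [CStarRing A]
  [NormedSpace ℂ A] [IsScalarTower ℂ A A] [SMulCommClass ℂ A A]
  [StarModule ℂ A] [CompleteSpace A]

/-- Cuntz–Krieger family, row-finite no sources formulation:
`∑_{λ ∈ vΛ^n} t_λ t_λ* = t_v`. -/
def IsCKrf (σ : G.Cocycle) (t : G.Path → A) : Prop :=
  G.IsTCK σ t ∧ ∀ v (n : Fin k → ℕ) (F : Finset G.Path), G.IsVertex v →
    (F : Set G.Path) = {l | G.r l = v ∧ G.d l = n} →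
    ∑ l ∈ F, t l * star (t l) = t v

end CStar2

/-- A filter in a `k`-graph. -/
def IsFilter (S : Set G.Path) : Prop :=
  (∀ l, (∃ α, G.s l = G.r α ∧ G.comp l α ∈ S) → l ∈ S) ∧
  (∀ μ ∈ S, ∀ ν ∈ S, (G.MCE μ ν ∩ S).Nonempty)

/-- An ultrafilter: a filter meeting every `Λ^n`. -/
def IsUltrafilter (S : Set G.Path) : Prop :=
  G.IsFilter S ∧ ∀ n : Fin k → ℕ, ∃ l ∈ S, G.d l = n

/-- `ℓ_μ(S) = {ν : νΛ ∩ μS ≠ ∅}`. -/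
def lmap (μ : G.Path) (S : Set G.Path) : Set G.Path :=
  {ν | ∃ τ ∈ S, G.s μ = G.r τ ∧ ∃ α, G.s ν = G.r α ∧ G.comp ν α = G.comp μ τ}

/-- `μ ∼ ν`: `ℓ_μ(S) = ℓ_ν(S)` for every ultrafilter `S` with `r(S) = s(μ)`. -/
def PEquiv (μ ν : G.Path) : Prop :=
  ∀ S, G.IsUltrafilter S → G.s μ ∈ S → G.lmap μ S = G.lmap ν S

/-- `d` with values in `ℤ^k`. -/
def dZ (l : G.Path) : Fin k → ℤ := fun i => (G.d l i : ℤ)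

/-- `Per(Λ) ≤ ℤ^k`, generated by `{d(μ) - d(ν) : μ ∼ ν}`. -/
def PerGroup : AddSubgroup (Fin k → ℤ) :=
  AddSubgroup.closure
    {m | ∃ μ ν, G.s μ = G.s ν ∧ G.PEquiv μ ν ∧ m = G.dZ μ - G.dZ ν}

/-- The hereditary set `H_Per`. -/
def HPer : Set G.Path :=
  {v | G.IsVertex v ∧ ∀ m n : Fin k → ℕ,
    ((fun i => (m i : ℤ)) - fun i => (n i : ℤ)) ∈ G.PerGroup →
    ∀ l, G.r l = v → G.d l = m →
      ∃ μ, G.r μ = v ∧ G.d μ = n ∧ G.s μ = G.s l ∧ G.PEquiv l μ}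

end KGraph


section CStarAux

open scoped BigOperators

namespace KGraph

variable {k : ℕ} {G : KGraph k}
variable {A : Type*} [NonUnitalNormedRing A] [StarRing A] [CStarRing A]
  [NormedSpace ℂ A] [IsScalarTower ℂ A A] [SMulCommClass ℂ A A]
  [StarModule ℂ A] [CompleteSpace A]
variable {σ : G.Cocycle} {t : G.Path → A}

/-- `q_l = t_l t_l^*`. -/
def qp (t : G.Path → A) (l : G.Path) : A := t l * star (t l)

variable (ht : G.IsTCK σ t) (hFA : G.FinitelyAligned)

section basic
include ht

lemma tck_tr_mul (l : G.Path) : t (G.r l) * t l = t l := by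
  have h : G.s (G.r l) = G.r l := G.s_vertex (G.vertex_r l)
  have := ht.2.2.1 (G.r l) l h
  rw [this, G.id_comp, σ.left_id, one_smul]

lemma tck_mul_ts (l : G.Path) : t l * t (G.s l) = t l := by
  have h : G.s l = G.r (G.s l) := (G.r_vertex (G.vertex_s l)).symm
  have := ht.2.2.1 l (G.s l) h
  rw [this, G.comp_id, σ.right_id, one_smul]

lemma tck_star_mul (l : G.Path) : star (t l) * t l = t (G.s l) := ht.2.2.2.1 l

lemma qv_eq {v : G.Path} (hv : G.IsVertex v) : qp t v = t v := by
  rw [qp, (ht.1 v hv).1, (ht.1 v hv).2]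

lemma q_star (l : G.Path) : star (qp t l) = qp t l := by
  simp [qp, star_mul]

lemma q_mul_t (l : G.Path) : qp t l * t l = t l := by
  rw [qp, mul_assoc, tck_star_mul ht, tck_mul_ts ht]

lemma tstar_mul_q (l : G.Path) : star (t l) * qp t l = star (t l) := by
  have := congrArg star (q_mul_t ht l)
  rwa [star_mul, q_star ht] at this

lemma q_idem (l : G.Path) : qp t l * qp t l = qp t l := by
  rw [qp, ← mul_assoc, mul_assoc (t l), tck_star_mul ht, tck_mul_ts ht]

lemma tv_mul_t {l v : G.Path} (hr : G.r l = v) : t v * t l = t l := by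
  rw [← hr]; exact tck_tr_mul ht l

lemma tv_mul_q {l v : G.Path} (hr : G.r l = v) : t v * qp t l = qp t l := by
  rw [qp, ← mul_assoc, tv_mul_t ht hr]

lemma q_mul_tv {l v : G.Path} (hr : G.r l = v) (hv : G.IsVertex v) :
    qp t l * t v = qp t l := by
  have := congrArg star (tv_mul_q ht hr)
  rwa [star_mul, q_star ht, (ht.1 v hv).1] at this

lemma q_mce (μ ν : G.Path) (F : Finset G.Path) (hF : (F : Set G.Path) = G.MCE μ ν) :
    qp t μ * qp t ν = ∑ l ∈ F, qp t l :=
  ht.2.2.2.2 μ ν F hF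

end basic

section withFA
include ht hFA

lemma q_comm (μ ν : G.Path) : Commute (qp t μ) (qp t ν) := by
  have h1 := q_mce ht μ ν (hFA μ ν).toFinset (Set.Finite.coe_toFinset _)
  have h2 := q_mce ht ν μ (hFA μ ν).toFinset
    (by rw [Set.Finite.coe_toFinset, G.mce_comm])
  exact h1.trans h2.symm

lemma q_orth {α β : G.Path} (hd : G.d α = G.d β) (hne : α ≠ β) :
    qp t α * qp t β = 0 := by
  have hmce : ((∅ : Finset G.Path) : Set G.Path) = G.MCE α β := by
    ext l
    simp only [Finset.coe_empty, Set.mem_empty_iff_false, false_iff]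
    intro hl
    obtain ⟨h1, h2⟩ := G.mce_of_eq_deg hd hl
    exact hne (h1 ▸ h2)
  rw [q_mce ht α β ∅ hmce, Finset.sum_empty]

end withFA

section sandwich
include ht

omit ht in
lemma conj_mul_self {c : ℂ} (hc : ‖c‖ = 1) : (starRingEnd ℂ) c * c = 1 := by
  have h1 : Complex.normSq c = 1 := by
    rw [Complex.normSq_eq_norm_sq, hc, one_pow]
  rw [mul_comm, Complex.mul_conj, h1]; norm_num

omit ht in
lemma conj_smul_cancel {c : ℂ} (hc : ‖c‖ = 1) (x : A) :
    c • (starRingEnd ℂ) c • x = x := by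
  rw [smul_smul, mul_comm, conj_mul_self hc, one_smul]

lemma tstar_comp (lam α : G.Path) (h : G.s lam = G.r α) :
    star (t lam) * t (G.comp lam α) = (starRingEnd ℂ) (σ.c lam α) • t α := by
  have hc := ht.2.2.1 lam α h
  have key : σ.c lam α • (star (t lam) * t (G.comp lam α)) = t α := by
    rw [← mul_smul_comm, ← hc, ← mul_assoc, tck_star_mul ht, h, tck_tr_mul ht]
  have h2 := congrArg (fun x => (starRingEnd ℂ) (σ.c lam α) • x) key
  simpa [smul_smul, conj_mul_self (σ.norm_one lam α h)] using h2

lemma tstar_q_comp (lam α : G.Path) (h : G.s lam = G.r α) :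
    star (t lam) * qp t (G.comp lam α) * t lam = qp t α := by
  have h1 := tstar_comp ht lam α h
  have h2 : star (t (G.comp lam α)) * t lam = σ.c lam α • star (t α) := by
    simpa [star_mul, star_smul] using congrArg star h1
  rw [qp, show star (t lam) * (t (G.comp lam α) * star (t (G.comp lam α))) * t lam
      = (star (t lam) * t (G.comp lam α)) * (star (t (G.comp lam α)) * t lam) by
      rw [mul_assoc, mul_assoc, mul_assoc], h1, h2]
  rw [smul_mul_smul_comm, conj_mul_self (σ.norm_one lam α h), one_smul, qp]

end sandwich

/-- the set `Ext(lam; {μ})` -/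
def extSet (G : KGraph k) (lam μ : G.Path) : Set G.Path :=
  {α | G.s lam = G.r α ∧ G.comp lam α ∈ G.MCE lam μ}

lemma extSet_finite (hFA : G.FinitelyAligned) (lam μ : G.Path) :
    (G.extSet lam μ).Finite := by
  apply Set.Finite.of_finite_image (f := G.comp lam)
  · exact (hFA lam μ).subset (by rintro x ⟨α, ⟨h1, h2⟩, rfl⟩; exact h2)
  · rintro α ⟨h1, -⟩ β ⟨h2, -⟩ hc
    exact G.comp_right_cancel h1 h2 hc

include ht hFA in
lemma tstar_q_t (lam μ : G.Path) (E : Finset G.Path)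
    (hE : (E : Set G.Path) = G.extSet lam μ) :
    star (t lam) * qp t μ * t lam = ∑ α ∈ E, qp t α := by
  classical
  obtain ⟨M, hM⟩ : ∃ M : Finset G.Path, (M : Set G.Path) = G.MCE lam μ :=
    ⟨(hFA lam μ).toFinset, Set.Finite.coe_toFinset _⟩
  have e1 : star (t lam) * (qp t μ * qp t lam) * t lam = star (t lam) * qp t μ * t lam := by
    rw [mul_assoc (star (t lam)), mul_assoc (qp t μ), q_mul_t ht, ← mul_assoc]
  have key : star (t lam) * qp t μ * t lam = ∑ ρ ∈ M, star (t lam) * qp t ρ * t lam := by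
    calc star (t lam) * qp t μ * t lam
        = star (t lam) * (qp t μ * qp t lam) * t lam := e1.symm
      _ = star (t lam) * (∑ ρ ∈ M, qp t ρ) * t lam := by
          rw [q_mce ht μ lam M (by rw [hM, G.mce_comm])]
      _ = ∑ ρ ∈ M, star (t lam) * qp t ρ * t lam := by
          rw [Finset.mul_sum, Finset.sum_mul]
  rw [key]
  refine (Finset.sum_bij (fun α hα => G.comp lam α) ?_ ?_ ?_ ?_).symm
  · intro α hα
    have hα' : α ∈ G.extSet lam μ := hE ▸ Finset.mem_coe.mpr hα
    rw [← Finset.mem_coe, hM]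
    exact hα'.2
  · intro α hα β hβ hc
    have hα' : α ∈ G.extSet lam μ := hE ▸ Finset.mem_coe.mpr hα
    have hβ' : β ∈ G.extSet lam μ := hE ▸ Finset.mem_coe.mpr hβ
    exact G.comp_right_cancel hα'.1 hβ'.1 hc
  · intro ρ hρ
    have hρ' : ρ ∈ G.MCE lam μ := hM ▸ Finset.mem_coe.mpr hρ
    obtain ⟨α, hα1, hα2⟩ := hρ'.2.1
    refine ⟨α, ?_, hα2⟩
    rw [← Finset.mem_coe, hE]
    exact ⟨hα1, hα2.symm ▸ hρ'⟩
  · intro α hα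
    have hα' : α ∈ G.extSet lam μ := hE ▸ Finset.mem_coe.mpr hα
    exact (tstar_q_comp ht lam α hα'.1).symm

end KGraph

end CStarAux


section DeltaAux

open scoped Classical

namespace KGraph

variable {k : ℕ} {G : KGraph k}
variable {A : Type*} [NonUnitalNormedRing A] [StarRing A] [CStarRing A]
  [NormedSpace ℂ A] [IsScalarTower ℂ A A] [SMulCommClass ℂ A A]
  [StarModule ℂ A] [CompleteSpace A]
variable {σ : G.Cocycle} {t : G.Path → A}
variable (ht : G.IsTCK σ t) (hFA : G.FinitelyAligned)

include ht hFA

lemma delta_pairwise (v : G.Path) (F : Finset G.Path) :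
    (F : Set G.Path).Pairwise (Function.onFun Commute fun l =>
      ((t v * star (t v) - t l * star (t l) : A) : Unitization ℂ A)) := by
  intro a _ b _ _
  have h1 : Commute (qp t v - qp t a) (qp t v) :=
    (q_comm ht hFA v v).sub_left (q_comm ht hFA a v)
  have h2 : Commute (qp t v - qp t a) (qp t b) :=
    (q_comm ht hFA v b).sub_left (q_comm ht hFA a b)
  have hA : Commute (qp t v - qp t a) (qp t v - qp t b) := h1.sub_right h2
  exact hA.map (Unitization.inrNonUnitalAlgHom ℂ A)

lemma inr_delta (v : G.Path) (F : Finset G.Path) :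
    ((G.Delta t v F : A) : Unitization ℂ A) =
      ((qp t v : A) : Unitization ℂ A) * F.noncommProd (fun l =>
        ((t v * star (t v) - t l * star (t l) : A) : Unitization ℂ A))
        (delta_pairwise ht hFA v F) := by
  have hcomm := delta_pairwise ht hFA v F
  have hd : G.Delta t v F = (((qp t v : A) : Unitization ℂ A) * F.noncommProd _ hcomm).snd := by
    simp only [Delta]
    rw [dif_pos hcomm]
    rfl
  rw [hd]
  have hfst : ((((qp t v : A) : Unitization ℂ A)) * F.noncommProd (fun l =>
      ((t v * star (t v) - t l * star (t l) : A) : Unitization ℂ A)) hcomm).fst = 0 := by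
    rw [Unitization.fst_mul]
    simp
  have h2 := Unitization.inl_fst_add_inr_snd_eq ((((qp t v : A) : Unitization ℂ A)) *
    F.noncommProd (fun l => ((t v * star (t v) - t l * star (t l) : A) : Unitization ℂ A)) hcomm)
  rw [hfst] at h2
  simpa using h2

lemma delta_empty (v : G.Path) : G.Delta t v ∅ = qp t v := by
  apply Unitization.inr_injective (R := ℂ)
  rw [inr_delta ht hFA, Finset.noncommProd_empty, mul_one]

lemma delta_insert {l : G.Path} {F : Finset G.Path} (v : G.Path) (hl : l ∉ F) :
    G.Delta t v (insert l F) = (qp t v - qp t l) * G.Delta t v F := by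
  classical
  apply Unitization.inr_injective (R := ℂ)
  rw [Unitization.inr_mul, inr_delta ht hFA, inr_delta ht hFA,
    Finset.noncommProd_insert_of_notMem _ _ _ _ hl, ← mul_assoc, ← mul_assoc]
  congr 1
  show ((qp t v : A) : Unitization ℂ A) * ((qp t v - qp t l : A) : Unitization ℂ A)
      = ((qp t v - qp t l : A) : Unitization ℂ A) * ((qp t v : A) : Unitization ℂ A)
  rw [← Unitization.inr_mul, ← Unitization.inr_mul]
  congr 1
  exact ((q_comm ht hFA v v).sub_right (q_comm ht hFA v l)).eq

lemma delta_comm (ρ v : G.Path) (F : Finset G.Path) :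
    Commute (qp t ρ) (G.Delta t v F) := by
  classical
  induction F using Finset.induction_on with
  | empty => rw [delta_empty ht hFA]; exact q_comm ht hFA ρ v
  | insert _ _ hl ih =>
    rw [delta_insert ht hFA _ hl]
    exact ((q_comm ht hFA ρ v).sub_right (q_comm ht hFA ρ _)).mul_right ih

lemma delta_mem_adjoin (v : G.Path) (F : Finset G.Path) :
    G.Delta t v F ∈ NonUnitalStarAlgebra.adjoin ℂ (Set.range t) := by
  classical
  have hq : ∀ l, qp t l ∈ NonUnitalStarAlgebra.adjoin ℂ (Set.range t) := fun l =>
    mul_mem (NonUnitalStarAlgebra.subset_adjoin ℂ _ ⟨l, rfl⟩)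
      (star_mem (NonUnitalStarAlgebra.subset_adjoin ℂ _ ⟨l, rfl⟩))
  induction F using Finset.induction_on with
  | empty => rw [delta_empty ht hFA]; exact hq v
  | insert _ _ hl ih =>
    rw [delta_insert ht hFA _ hl]
    exact mul_mem (sub_mem (hq _) (hq _)) ih

variable {v : G.Path}

lemma delta_mul_tv (hv : G.IsVertex v) {F : Finset G.Path} (hr : ∀ l ∈ F, G.r l = v) :
    G.Delta t v F * t v = G.Delta t v F := by
  classical
  induction F using Finset.induction_on with
  | empty => rw [delta_empty ht hFA, qv_eq ht hv]; exact (ht.1 v hv).2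
  | @insert a F' hl ih =>
    rw [delta_insert ht hFA _ hl, mul_assoc, ih (fun l hl' => hr l (Finset.mem_insert_of_mem hl'))]

lemma delta_absorb {F : Finset G.Path} {a : G.Path} (hv : G.IsVertex v)
    (ha : a ∈ F) (hra : G.r a = v) :
    (qp t v - qp t a) * G.Delta t v F = G.Delta t v F := by
  classical
  have hF : F = insert a (F.erase a) := (Finset.insert_erase ha).symm
  rw [hF, delta_insert ht hFA _ (Finset.notMem_erase a F), ← mul_assoc]
  congr 1
  have h1 : qp t v * qp t a = qp t a := by rw [qv_eq ht hv]; exact tv_mul_q ht hra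
  have h2 : qp t a * qp t v = qp t a := by rw [qv_eq ht hv]; exact q_mul_tv ht hra hv
  rw [sub_mul, mul_sub, mul_sub, q_idem ht v, h1, h2, q_idem ht a]
  abel

lemma delta_union (hv : G.IsVertex v) {E E' : Finset G.Path}
    (hrE : ∀ l ∈ E, G.r l = v) (hrE' : ∀ l ∈ E', G.r l = v) :
    G.Delta t v E * G.Delta t v E' = G.Delta t v (E ∪ E') := by
  classical
  induction E' using Finset.induction_on with
  | empty =>
    rw [Finset.union_empty, delta_empty ht hFA, qv_eq ht hv, delta_mul_tv ht hFA hv hrE]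
  | @insert a E'' hl ih =>
    have hc : Commute (qp t v - qp t a) (G.Delta t v E) :=
      (delta_comm ht hFA v v E).sub_left (delta_comm ht hFA a v E)
    rw [delta_insert ht hFA _ hl, ← mul_assoc, ← hc.eq, mul_assoc,
      ih (fun l hl' => hrE' l (Finset.mem_insert_of_mem hl'))]
    by_cases haE : a ∈ E ∪ E''
    · rw [delta_absorb ht hFA hv haE (hrE' a (Finset.mem_insert_self a E'')),
        Finset.union_insert, Finset.insert_eq_self.mpr haE]
    · rw [Finset.union_insert, delta_insert ht hFA _ haE]

lemma delta_sub_sum (hv : G.IsVertex v) {E : Finset G.Path}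
    (hr : ∀ l ∈ E, G.r l = v)
    (horth : ∀ a ∈ E, ∀ b ∈ E, a ≠ b → qp t a * qp t b = 0) :
    G.Delta t v E = t v - ∑ a ∈ E, qp t a := by
  classical
  induction E using Finset.induction_on with
  | empty => rw [delta_empty ht hFA, qv_eq ht hv]; simp
  | @insert a E' hl ih =>
    have hra : G.r a = v := hr a (Finset.mem_insert_self a E')
    rw [delta_insert ht hFA _ hl, ih (fun l hl' => hr l (Finset.mem_insert_of_mem hl'))
      (fun x hx y hy => horth x (Finset.mem_insert_of_mem hx) y (Finset.mem_insert_of_mem hy)),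
      qv_eq ht hv]
    have h1 : t v * t v = t v := (ht.1 v hv).2
    have h2 : t v * (∑ b ∈ E', qp t b) = ∑ b ∈ E', qp t b := by
      rw [Finset.mul_sum]
      exact Finset.sum_congr rfl (fun b hb => tv_mul_q ht (hr b (Finset.mem_insert_of_mem hb)))
    have h3 : qp t a * t v = qp t a := q_mul_tv ht hra hv
    have h4 : qp t a * (∑ b ∈ E', qp t b) = 0 := by
      rw [Finset.mul_sum]
      refine Finset.sum_eq_zero (fun b hb => ?_)
      exact horth a (Finset.mem_insert_self a E') b (Finset.mem_insert_of_mem hb)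
        (fun hab => hl (hab ▸ hb))
    rw [mul_sub, sub_mul, sub_mul, h1, h2, h3, h4, Finset.sum_insert hl]
    abel

omit ht hFA in
lemma ext_finite' (hFA : G.FinitelyAligned) (lam : G.Path) (F : Finset G.Path) :
    (G.Ext lam (F : Set G.Path)).Finite := by
  have h : G.Ext lam (F : Set G.Path) = ⋃ ν ∈ (F : Set G.Path), G.extSet lam ν := by
    ext α
    simp only [Ext, extSet, Set.mem_setOf_eq, Set.mem_iUnion, Finset.mem_coe]
    constructor
    · rintro ⟨h1, ν, hν, h2⟩; exact ⟨ν, hν, h1, h2⟩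
    · rintro ⟨ν, hν, h1, h2⟩; exact ⟨h1, ν, hν, h2⟩
  rw [h]
  exact Set.Finite.biUnion F.finite_toSet (fun ν _ => extSet_finite hFA lam ν)

lemma delta_sandwich {lam : G.Path} (hv : G.IsVertex v) (hrlam : G.r lam = v)
    (F : Finset G.Path) (hr : ∀ l ∈ F, G.r l = v)
    (Ex : Finset G.Path) (hEx : (Ex : Set G.Path) = G.Ext lam (F : Set G.Path)) :
    star (t lam) * G.Delta t v F * t lam = G.Delta t (G.s lam) Ex := by
  classical
  induction F using Finset.induction_on generalizing Ex with
  | empty =>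
    have hEx0 : Ex = ∅ := by
      apply Finset.coe_injective
      rw [hEx]
      ext α
      simp [Ext]
    subst hEx0
    rw [delta_empty ht hFA, delta_empty ht hFA, qv_eq ht hv, qv_eq ht (G.vertex_s lam)]
    have h1 : star (t lam) * t v = star (t lam) := by
      have := congrArg star (tv_mul_t ht hrlam)
      rwa [star_mul, (ht.1 v hv).1] at this
    rw [h1, tck_star_mul ht]
  | @insert μ F' hμ ih =>
    set E1 : Finset G.Path := (extSet_finite hFA lam μ).toFinset with hE1def
    set E2 : Finset G.Path := (ext_finite' hFA lam F').toFinset with hE2def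
    have hE1 : (E1 : Set G.Path) = G.extSet lam μ := Set.Finite.coe_toFinset _
    have hE2 : (E2 : Set G.Path) = G.Ext lam (F' : Set G.Path) := Set.Finite.coe_toFinset _
    have hExu : Ex = E1 ∪ E2 := by
      apply Finset.coe_injective
      rw [hEx, Finset.coe_union, hE1, hE2]
      ext α
      simp only [Ext, extSet, Set.mem_setOf_eq, Set.mem_union, Finset.coe_insert,
        Set.mem_insert_iff, Finset.mem_coe]
      constructor
      · rintro ⟨h1, ν, (rfl | hν), h2⟩
        · exact Or.inl ⟨h1, h2⟩
        · exact Or.inr ⟨h1, ν, hν, h2⟩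
      · rintro (⟨h1, h2⟩ | ⟨h1, ν, hν, h2⟩)
        · exact ⟨h1, μ, Or.inl rfl, h2⟩
        · exact ⟨h1, ν, Or.inr hν, h2⟩
    have hrF' : ∀ l ∈ F', G.r l = v := fun l hl => hr l (Finset.mem_insert_of_mem hl)
    have hIH := ih hrF' E2 hE2
    -- split the sandwich
    have hql : qp t lam * t lam = t lam := q_mul_t ht lam
    have hqcomm : qp t lam * G.Delta t v F' = G.Delta t v F' * qp t lam :=
      (delta_comm ht hFA lam v F').eq
    have hsplit : star (t lam) * G.Delta t v (insert μ F') * t lam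
        = (star (t lam) * (qp t v - qp t μ) * t lam) * (star (t lam) * G.Delta t v F' * t lam) := by
      rw [delta_insert ht hFA _ hμ]
      have e1 : G.Delta t v F' * t lam = t lam * (star (t lam) * (G.Delta t v F' * t lam)) := by
        conv_rhs => rw [← mul_assoc, ← mul_assoc]
        rw [show t lam * star (t lam) = qp t lam from rfl, hqcomm, mul_assoc, hql]
      calc star (t lam) * ((qp t v - qp t μ) * G.Delta t v F') * t lam
          = star (t lam) * (qp t v - qp t μ) * (G.Delta t v F' * t lam) := by
            rw [mul_assoc, mul_assoc, mul_assoc]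
        _ = star (t lam) * (qp t v - qp t μ) * (t lam * (star (t lam) * (G.Delta t v F' * t lam))) := by
            rw [← e1]
        _ = (star (t lam) * (qp t v - qp t μ) * t lam) * (star (t lam) * G.Delta t v F' * t lam) := by
            simp only [mul_assoc]
    -- first factor
    have hfirst : star (t lam) * (qp t v - qp t μ) * t lam = G.Delta t (G.s lam) E1 := by
      have hqv : star (t lam) * qp t v * t lam = t (G.s lam) := by
        rw [qv_eq ht hv]
        have h1 : star (t lam) * t v = star (t lam) := by
          have := congrArg star (tv_mul_t ht hrlam)
          rwa [star_mul, (ht.1 v hv).1] at this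
        rw [h1, tck_star_mul ht]
      have hqμ : star (t lam) * qp t μ * t lam = ∑ α ∈ E1, qp t α := by
        apply tstar_q_t ht hFA lam μ E1 hE1
      have horth : ∀ a ∈ E1, ∀ b ∈ E1, a ≠ b → qp t a * qp t b = 0 := by
        intro a ha b hb hab
        have ha' : a ∈ G.extSet lam μ := hE1 ▸ Finset.mem_coe.mpr ha
        have hb' : b ∈ G.extSet lam μ := hE1 ▸ Finset.mem_coe.mpr hb
        have hda : G.d lam + G.d a = G.d lam ⊔ G.d μ := by
          rw [← G.d_comp lam a ha'.1]; exact ha'.2.1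
        have hdb : G.d lam + G.d b = G.d lam ⊔ G.d μ := by
          rw [← G.d_comp lam b hb'.1]; exact hb'.2.1
        have : G.d a = G.d b := add_left_cancel (hda.trans hdb.symm)
        exact q_orth ht hFA this hab
      have hrE1 : ∀ α ∈ E1, G.r α = G.s lam := by
        intro α hα
        have hα' : α ∈ G.extSet lam μ := hE1 ▸ Finset.mem_coe.mpr hα
        exact hα'.1.symm
      rw [delta_sub_sum ht hFA (G.vertex_s lam) hrE1 horth, ← hqv, ← hqμ]
      rw [mul_sub, sub_mul]
    have hrE1 : ∀ α ∈ E1, G.r α = G.s lam := by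
      intro α hα
      have hα' : α ∈ G.extSet lam μ := hE1 ▸ Finset.mem_coe.mpr hα
      exact hα'.1.symm
    have hrE2 : ∀ α ∈ E2, G.r α = G.s lam := by
      intro α hα
      have hα' : α ∈ G.Ext lam (F' : Set G.Path) := hE2 ▸ Finset.mem_coe.mpr hα
      exact hα'.1.symm
    rw [hsplit, hfirst, hIH, delta_union ht hFA (G.vertex_s lam) hrE1 hrE2, hExu]

end KGraph

end DeltaAux


section MoreAux

open scoped Classical

namespace KGraph

variable {k : ℕ} {G : KGraph k}
variable {A : Type*} [NonUnitalNormedRing A] [StarRing A] [CStarRing A]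
  [NormedSpace ℂ A] [IsScalarTower ℂ A A] [SMulCommClass ℂ A A]
  [StarModule ℂ A] [CompleteSpace A]
variable {σ : G.Cocycle} {t : G.Path → A}
variable (ht : G.IsTCK σ t) (hFA : G.FinitelyAligned)

include ht

lemma q_comp {lam μ : G.Path} (h : G.s lam = G.r μ) :
    qp t (G.comp lam μ) = t lam * qp t μ * star (t lam) := by
  have hc := ht.2.2.1 lam μ h
  have key : (t lam * t μ) * star (t lam * t μ) = qp t (G.comp lam μ) := by
    rw [hc, star_smul, smul_mul_smul_comm]
    have hcc : σ.c lam μ * star (σ.c lam μ) = 1 := by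
      rw [Complex.star_def, mul_comm]; exact conj_mul_self (σ.norm_one lam μ h)
    rw [hcc, one_smul, qp]
  rw [← key, star_mul, qp, mul_assoc, mul_assoc, mul_assoc]

lemma q_comp_mul_q {lam lam' : G.Path} (h : G.s lam = G.r lam') :
    qp t (G.comp lam lam') * qp t lam = qp t (G.comp lam lam') := by
  rw [q_comp ht h]
  have h1 : star (t lam) * (t lam * star (t lam)) = star (t lam) := by
    have h2 := congrArg star (tck_mul_ts ht lam)
    rw [star_mul, (ht.1 _ (G.vertex_s lam)).1] at h2
    rw [← mul_assoc, tck_star_mul ht, h2]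
  rw [show qp t lam = t lam * star (t lam) from rfl,
    mul_assoc (t lam * qp t lam') (star (t lam)), h1]

include hFA

lemma delta_sub_tv_mem (I : Submodule ℂ A)
    (hId : ∀ x ∈ NonUnitalStarAlgebra.adjoin ℂ (Set.range t), ∀ y ∈ I, x * y ∈ I ∧ y * x ∈ I)
    {v : G.Path} (hv : G.IsVertex v) {E : Finset G.Path} (hr : ∀ a ∈ E, G.r a = v)
    (hqE : ∀ a ∈ E, qp t a ∈ I) : G.Delta t v E - t v ∈ I := by
  have hqmem : ∀ l, qp t l ∈ NonUnitalStarAlgebra.adjoin ℂ (Set.range t) := fun l =>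
    mul_mem (NonUnitalStarAlgebra.subset_adjoin ℂ _ ⟨l, rfl⟩)
      (star_mem (NonUnitalStarAlgebra.subset_adjoin ℂ _ ⟨l, rfl⟩))
  induction E using Finset.induction_on with
  | empty => rw [delta_empty ht hFA, qv_eq ht hv, sub_self]; exact zero_mem I
  | @insert a E' ha ih =>
    have hra : G.r a = v := hr a (Finset.mem_insert_self a E')
    have key : G.Delta t v (insert a E') - t v
        = (qp t v - qp t a) * (G.Delta t v E' - t v) + -(qp t a) := by
      rw [delta_insert ht hFA _ ha, mul_sub]
      have h1 : (qp t v - qp t a) * t v = t v - qp t a := by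
        rw [sub_mul, qv_eq ht hv, (ht.1 v hv).2, q_mul_tv ht hra hv]
      rw [h1]
      abel
    rw [key]
    refine add_mem ?_ (neg_mem (hqE a (Finset.mem_insert_self a E')))
    exact (hId _ (sub_mem (hqmem v) (hqmem a)) _
      (ih (fun x hx => hr x (Finset.mem_insert_of_mem hx))
          (fun x hx => hqE x (Finset.mem_insert_of_mem hx)))).1

lemma delta_image {v lam : G.Path} (hv : G.IsVertex v) (hrlam : G.r lam = v)
    {G₀ : Finset G.Path} (hrG : ∀ μ ∈ G₀, G.r μ = G.s lam) :
    G.Delta t v (G₀.image (G.comp lam))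
      = (t v - qp t lam) + t lam * G.Delta t (G.s lam) G₀ * star (t lam) := by
  induction G₀ using Finset.induction_on with
  | empty =>
    rw [Finset.image_empty, delta_empty ht hFA, delta_empty ht hFA, qv_eq ht hv,
      qv_eq ht (G.vertex_s lam), tck_mul_ts ht]
    rw [show t lam * star (t lam) = qp t lam from rfl]
    abel
  | @insert μ G' hμ ih =>
    have hsr : G.s lam = G.r μ := (hrG μ (Finset.mem_insert_self μ G')).symm
    have hrG' : ∀ x ∈ G', G.r x = G.s lam := fun x hx => hrG x (Finset.mem_insert_of_mem hx)
    have hinj : G.comp lam μ ∉ G'.image (G.comp lam) := by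
      intro hmem
      obtain ⟨μ', hμ', he⟩ := Finset.mem_image.mp hmem
      have : μ' = μ := G.comp_right_cancel (hrG' μ' hμ').symm hsr he
      exact hμ (this ▸ hμ')
    rw [Finset.image_insert, delta_insert ht hFA _ hinj, ih hrG']
    -- rewrite q (comp lam μ)
    have hq : qp t v - qp t (G.comp lam μ)
        = (t v - qp t lam) + t lam * (t (G.s lam) - qp t μ) * star (t lam) := by
      rw [q_comp ht hsr, qv_eq ht hv, mul_sub, sub_mul, tck_mul_ts ht]
      rw [show t lam * star (t lam) = qp t lam from rfl]
      abel
    rw [hq]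
    -- expand the product
    have hz1 : (t v - qp t lam) * t lam = 0 := by
      rw [sub_mul, tv_mul_t ht hrlam, q_mul_t ht, sub_self]
    have hz2 : star (t lam) * (t v - qp t lam) = 0 := by
      have := congrArg star hz1
      rwa [star_mul, star_sub, (ht.1 v hv).1, q_star ht, star_zero] at this
    have hid : (t v - qp t lam) * (t v - qp t lam) = t v - qp t lam := by
      rw [sub_mul, mul_sub, mul_sub, (ht.1 v hv).2, tv_mul_q ht hrlam,
        q_mul_tv ht hrlam hv, q_idem ht]
      abel
    have hmid : (t lam * (t (G.s lam) - qp t μ) * star (t lam))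
        * (t lam * G.Delta t (G.s lam) G' * star (t lam))
        = t lam * ((t (G.s lam) - qp t μ) * G.Delta t (G.s lam) G') * star (t lam) := by
      have e1 : (t (G.s lam) - qp t μ) * (star (t lam) * (t lam * G.Delta t (G.s lam) G'))
          = (t (G.s lam) - qp t μ) * G.Delta t (G.s lam) G' := by
        rw [← mul_assoc (star (t lam)), tck_star_mul ht]
        have h3 : (t (G.s lam) - qp t μ) * t (G.s lam) = t (G.s lam) - qp t μ := by
          rw [sub_mul, (ht.1 _ (G.vertex_s lam)).2, q_mul_tv ht hsr.symm (G.vertex_s lam)]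
        rw [← mul_assoc, h3]
      calc (t lam * (t (G.s lam) - qp t μ) * star (t lam))
            * (t lam * G.Delta t (G.s lam) G' * star (t lam))
          = t lam * ((t (G.s lam) - qp t μ) * (star (t lam) * (t lam * G.Delta t (G.s lam) G')))
              * star (t lam) := by simp only [mul_assoc]
        _ = t lam * ((t (G.s lam) - qp t μ) * G.Delta t (G.s lam) G') * star (t lam) := by
            rw [e1]
    have hz3 : (t v - qp t lam) * (t lam * G.Delta t (G.s lam) G' * star (t lam)) = 0 := by
      rw [← mul_assoc, ← mul_assoc, hz1, zero_mul, zero_mul]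
    have hz4 : (t lam * (t (G.s lam) - qp t μ) * star (t lam)) * (t v - qp t lam) = 0 := by
      rw [mul_assoc, mul_assoc, hz2, mul_zero, mul_zero]
    rw [add_mul, mul_add, mul_add, hid, hz3, hz4, hmid, delta_insert ht hFA _ hμ,
      qv_eq ht (G.vertex_s lam)]
    abel

end KGraph

end MoreAux


/-- `B_I = {F ∈ FE(Λ \\ ΛH_I) : Δ(t)^F ∈ I}` is a satiated subset of
`FE(Λ \\ ΛH_I)`. -/
theorem stmt10 {k : ℕ} (G : KGraph k) (hFA : G.FinitelyAligned) (σ : G.Cocycle)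
    {A : Type*} [NonUnitalNormedRing A] [StarRing A] [CStarRing A]
    [NormedSpace ℂ A] [IsScalarTower ℂ A A] [SMulCommClass ℂ A A]
    [StarModule ℂ A] [CompleteSpace A]
    (Ε : Set (Set G.Path)) (hΕ : G.Satiated Ε)
    (t : G.Path → A) (ht : G.IsRelCK σ Ε t)
    (I : Submodule ℂ A) (hIclosed : IsClosed (I : Set A))
    (hIsub : (I : Set A) ⊆ G.cstarOf t)
    (hIabs : ∀ x ∈ G.cstarOf t, ∀ y ∈ I, x * y ∈ I ∧ y * x ∈ I) :
    ∀ HI W : Set G.Path, HI = {w | G.IsVertex w ∧ t w ∈ I} →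
      W = {l | G.s l ∉ HI} →
      G.SatiatedIn W
        {E | G.IsFEIn W E ∧
          ∀ (F : Finset G.Path) (v : G.Path), (F : Set G.Path) = E →
            G.IsVertex v → (∀ μ ∈ E, G.r μ = v) → G.Delta t v F ∈ I} := by
  classical
  intro HI W hHI hW
  obtain ⟨htck, hrel⟩ := ht
  have hadj : ∀ x ∈ NonUnitalStarAlgebra.adjoin ℂ (Set.range t), x ∈ G.cstarOf t :=
    fun x hx => subset_closure hx
  have hId : ∀ x ∈ NonUnitalStarAlgebra.adjoin ℂ (Set.range t), ∀ y ∈ I, x * y ∈ I ∧ y * x ∈ I :=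
    fun x hx y hy => hIabs x (hadj x hx) y hy
  have htmem : ∀ l, t l ∈ NonUnitalStarAlgebra.adjoin ℂ (Set.range t) := fun l =>
    NonUnitalStarAlgebra.subset_adjoin ℂ _ ⟨l, rfl⟩
  have hqmem : ∀ l, KGraph.qp t l ∈ NonUnitalStarAlgebra.adjoin ℂ (Set.range t) := fun l =>
    mul_mem (htmem l) (star_mem (htmem l))
  have hsHI : ∀ l : G.Path, G.s l ∈ HI → t l ∈ I := by
    intro l hsl
    rw [hHI] at hsl
    have h1 : t l * t (G.s l) ∈ I := (hId (t l) (htmem l) _ hsl.2).1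
    rwa [KGraph.tck_mul_ts htck] at h1
  have hqHI : ∀ l : G.Path, G.s l ∈ HI → KGraph.qp t l ∈ I := fun l hsl =>
    (hId (star (t l)) (star_mem (htmem l)) (t l) (hsHI l hsl)).2
  have hher : ∀ l : G.Path, G.r l ∈ HI → G.s l ∈ HI := by
    intro l hrl
    rw [hHI] at hrl ⊢
    have h1 : t (G.r l) * t l ∈ I := (hId (t l) (htmem l) _ hrl.2).2
    rw [KGraph.tck_tr_mul htck] at h1
    have h2 : star (t l) * t l ∈ I := (hId (star (t l)) (star_mem (htmem l)) _ h1).1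
    rw [KGraph.tck_star_mul htck] at h2
    exact ⟨G.vertex_s l, h2⟩
  have hWdef : ∀ l : G.Path, l ∈ W ↔ G.s l ∉ HI := fun l => by
    rw [hW]; exact Iff.rfl
  have mceW : ∀ m x τ y y', τ ∈ G.MCE m x → τ ∈ W → G.s y = G.r y' → G.comp y y' = x →
      (G.MCE m y ∩ W).Nonempty := by
    intro m x τ y y' hτ hτW hyy' hyx
    obtain ⟨hd, ⟨β, hβ1, hβ2⟩, ⟨γ, hγ1, hγ2⟩⟩ := hτ
    have hy'γ : G.s y' = G.r γ := by rw [← hγ1, ← hyx, G.s_comp y y' hyy']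
    have hcomp : G.comp m β = G.comp y (G.comp y' γ) := by
      rw [hβ2, ← hγ2, ← hyx, G.comp_assoc y y' γ hyy' hy'γ]
    have hyc : G.s y = G.r (G.comp y' γ) := by rw [G.r_comp y' γ hy'γ, hyy']
    obtain ⟨ρ, η, hρmce, hρη, hρc⟩ := G.mce_factor hβ1 hyc hcomp
    refine ⟨ρ, hρmce, ?_⟩
    rw [hWdef]
    intro hsρ
    have h1 : G.s η ∈ HI := hher η (by rw [← hρη]; exact hsρ)
    have h2 : G.s η = G.s τ := by rw [← G.s_comp ρ η hρη, hρc, hβ2]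
    exact (hWdef τ).mp hτW (h2 ▸ h1)
  refine ⟨fun E hE => hE.1, ?_⟩
  intro F hF v hv hrF
  obtain ⟨hFE, hFdelta⟩ := hF
  obtain ⟨hFfin, hFW, hFnv, v₀, hv₀, hr₀, hex₀⟩ := hFE
  by_cases hFne : F.Nonempty
  swap
  · -- F is empty : W is empty, everything vacuous
    have hFempty : F = ∅ := Set.not_nonempty_iff_eq_empty.mp hFne
    have hallI : ∀ u, G.IsVertex u → t u ∈ I := by
      intro u hu
      have h := hFdelta ∅ u (by rw [Finset.coe_empty, hFempty]) hu
        (by rw [hFempty]; intro μ hμ; exact absurd hμ (Set.notMem_empty μ))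
      rwa [KGraph.delta_empty htck hFA, KGraph.qv_eq htck hu] at h
    have hWempty : ∀ l : G.Path, l ∉ W := fun l hl =>
      (hWdef l).mp hl (by rw [hHI]; exact ⟨G.vertex_s l, hallI _ (G.vertex_s l)⟩)
    refine ⟨?_, ?_, ?_, ?_⟩
    · intro l hl; exact absurd hl (hWempty l)
    · intro l hl; exact absurd hl (hWempty l)
    · intro lam lam' hlam
      rw [hFempty] at hlam; exact absurd hlam (Set.notMem_empty lam)
    · intro lam hlam
      rw [hFempty] at hlam; exact absurd hlam (Set.notMem_empty lam)
  obtain ⟨μ₀, hμ₀⟩ := hFne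
  have hv₀v : v₀ = v := by rw [← hr₀ μ₀ hμ₀, hrF μ₀ hμ₀]
  rw [hv₀v] at hex₀
  set F₀ := hFfin.toFinset with hF₀def
  have hF₀ : (F₀ : Set G.Path) = F := hFfin.coe_toFinset
  have hmemF₀ : ∀ {l}, l ∈ F → l ∈ F₀ := fun {l} hl => by
    rw [← Finset.mem_coe, hF₀]; exact hl
  have hrF₀ : ∀ l ∈ F₀, G.r l = v := fun l hl => hrF l (by rw [← hF₀]; exact Finset.mem_coe.mpr hl)
  have hΔF : G.Delta t v F₀ ∈ I := hFdelta F₀ v hF₀ hv hrF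
  refine ⟨?_, ?_, ?_, ?_⟩
  · -- (S1)
    intro l hlW hrl hlv
    have hE₀coe : ((insert l F₀ : Finset G.Path) : Set G.Path) = insert l F := by
      rw [Finset.coe_insert, hF₀]
    have hΔE₀ : G.Delta t v (insert l F₀) ∈ I := by
      by_cases hlF : l ∈ F₀
      · rw [Finset.insert_eq_self.mpr hlF]; exact hΔF
      · rw [KGraph.delta_insert htck hFA _ hlF]
        exact (hId _ (sub_mem (hqmem v) (hqmem l)) _ hΔF).1
    have hlnv : ¬ G.IsVertex l := fun hlvert =>
      hlv ((G.r_of_vertex l hlvert).symm.trans hrl)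
    refine ⟨⟨?_, ?_, ?_, ⟨v, hv, ?_, ?_⟩⟩, ?_⟩
    · rw [← hE₀coe]; exact (insert l F₀).finite_toSet
    · rw [Set.insert_subset_iff]; exact ⟨hlW, hFW⟩
    · intro μ hμ
      rcases Set.mem_insert_iff.mp hμ with rfl | hμF
      · exact hlnv
      · exact hFnv μ hμF
    · intro μ hμ
      rcases Set.mem_insert_iff.mp hμ with rfl | hμF
      · exact hrl
      · exact hrF μ hμF
    · intro m hm hrm
      obtain ⟨ν, hν, hne⟩ := hex₀ m hm hrm
      exact ⟨ν, Set.mem_insert_iff.mpr (Or.inr hν), hne⟩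
    · intro F' v' hcoe hv' hr'
      have hF' : F' = insert l F₀ := Finset.coe_injective (hcoe.trans hE₀coe.symm)
      have hvv : v' = v := (hr' l (Set.mem_insert l F)).symm.trans hrl
      rw [hF', hvv]
      exact hΔE₀
  · -- (S2)
    intro l hlW hrl hnoext
    have hwv : G.IsVertex (G.s l) := G.vertex_s l
    have hExtFin : (G.Ext l F).Finite := by
      rw [← hF₀]; exact KGraph.ext_finite' hFA l F₀
    have hExtInFin : (G.ExtIn W l F).Finite := by
      refine hExtFin.subset ?_
      rintro α ⟨h1, ν, hν, hmce, -⟩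
      exact ⟨h1, ν, hν, hmce⟩
    set EΛ := hExtFin.toFinset with hEΛdef
    have hEΛ : (EΛ : Set G.Path) = G.Ext l F := Set.Finite.coe_toFinset _
    set EW := hExtInFin.toFinset with hEWdef
    have hEW : (EW : Set G.Path) = G.ExtIn W l F := Set.Finite.coe_toFinset _
    set ER := EΛ \ EW with hERdef
    have hsubEW : EW ⊆ EΛ := by
      intro α hα
      have h1 : α ∈ G.ExtIn W l F := by rw [← hEW]; exact Finset.mem_coe.mpr hα
      obtain ⟨h2, ν, hν, hmce, -⟩ := h1
      rw [← Finset.mem_coe, hEΛ]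
      exact ⟨h2, ν, hν, hmce⟩
    have hunion : EW ∪ ER = EΛ := Finset.union_sdiff_of_subset hsubEW
    have hrEΛ : ∀ α ∈ EΛ, G.r α = G.s l := by
      intro α hα
      have h1 : α ∈ G.Ext l F := by rw [← hEΛ]; exact Finset.mem_coe.mpr hα
      exact h1.1.symm
    have hrEW : ∀ α ∈ EW, G.r α = G.s l := fun α hα => hrEΛ α (hsubEW hα)
    have hrER : ∀ α ∈ ER, G.r α = G.s l := fun α hα => hrEΛ α (Finset.sdiff_subset hα)
    have hΔEΛ : G.Delta t (G.s l) EΛ ∈ I := by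
      have hs := KGraph.delta_sandwich htck hFA hv hrl F₀ hrF₀ EΛ (by rw [hEΛ, hF₀])
      rw [← hs]
      have h1 : star (t l) * G.Delta t v F₀ ∈ I := (hId _ (star_mem (htmem l)) _ hΔF).1
      exact (hId (t l) (htmem l) _ h1).2
    have hqER : ∀ α ∈ ER, KGraph.qp t α ∈ I := by
      intro α hα
      obtain ⟨hαΛ, hαW⟩ := Finset.mem_sdiff.mp hα
      have hαExt : α ∈ G.Ext l F := by rw [← hEΛ]; exact Finset.mem_coe.mpr hαΛ
      have hcα : G.s α ∈ HI := by
        by_contra hc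
        apply hαW
        rw [hEWdef, Set.Finite.mem_toFinset]
        obtain ⟨h1, ν, hν, h2⟩ := hαExt
        exact ⟨h1, ν, hν, h2, (hWdef _).mpr (by rw [G.s_comp l α h1]; exact hc)⟩
      exact hqHI α hcα
    have hjI : G.Delta t (G.s l) ER - t (G.s l) ∈ I :=
      KGraph.delta_sub_tv_mem htck hFA I hId hwv hrER hqER
    have hΔEW : G.Delta t (G.s l) EW ∈ I := by
      have h1 : G.Delta t (G.s l) EW * t (G.s l) = G.Delta t (G.s l) EW :=
        KGraph.delta_mul_tv htck hFA hwv hrEW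
      have h2 : G.Delta t (G.s l) EW * G.Delta t (G.s l) ER = G.Delta t (G.s l) EΛ := by
        rw [KGraph.delta_union htck hFA hwv hrEW hrER, hunion]
      have key : G.Delta t (G.s l) EW
          = G.Delta t (G.s l) EΛ - G.Delta t (G.s l) EW *
            (G.Delta t (G.s l) ER - t (G.s l)) := by
        rw [mul_sub, h2, h1]; abel
      rw [key]
      exact sub_mem hΔEΛ (hId _ (KGraph.delta_mem_adjoin htck hFA _ _) _ hjI).1
    have hexh : G.ExhaustiveIn W (G.s l) (G.ExtIn W l F) := by
      intro m hm hrm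
      have hslm : G.s l = G.r m := hrm.symm
      have hlmW : G.comp l m ∈ W := (hWdef _).mpr
        (by rw [G.s_comp l m hslm]; exact (hWdef m).mp hm)
      have hrlm : G.r (G.comp l m) = v := by rw [G.r_comp l m hslm, hrl]
      obtain ⟨ν, hν, τ, hτmce, hτW⟩ := hex₀ (G.comp l m) hlmW hrlm
      obtain ⟨hdτ, ⟨β, hβ1, hβ2⟩, ⟨γ, hγ1, hγ2⟩⟩ := hτmce
      have hsmβ : G.s m = G.r β := by rw [← hβ1, G.s_comp l m hslm]
      have hc1 : G.comp l (G.comp m β) = τ := by rw [← G.comp_assoc l m β hslm hsmβ, hβ2]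
      have hslmβ : G.s l = G.r (G.comp m β) := by rw [G.r_comp m β hsmβ]; exact hslm
      obtain ⟨ρ, η, hρmce, hρη, hρc⟩ := G.mce_factor hslmβ hγ1 (by rw [hc1, ← hγ2])
      obtain ⟨α, hα1, hα2⟩ := hρmce.2.1
      have hρW : ρ ∈ W := by
        rw [hWdef]
        intro hsρ
        have h1 : G.s η ∈ HI := hher η (by rw [← hρη]; exact hsρ)
        have h2 : G.s η = G.s τ := by rw [← G.s_comp ρ η hρη, hρc, hc1]
        exact (hWdef τ).mp hτW (h2 ▸ h1)
      have hαExtIn : α ∈ G.ExtIn W l F :=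
        ⟨hα1, ν, hν, by rw [hα2]; exact ⟨hρmce, hρW⟩⟩
      have hsαη : G.s α = G.r η := by rw [← G.s_comp l α hα1, hα2]; exact hρη
      have hc2 : G.comp l (G.comp α η) = G.comp l (G.comp m β) := by
        rw [← G.comp_assoc l α η hα1 hsαη, hα2, hρc]
      have hslαη : G.s l = G.r (G.comp α η) := by rw [G.r_comp α η hsαη]; exact hα1
      have heq : G.comp m β = G.comp α η := G.comp_right_cancel hslmβ hslαη hc2.symm
      obtain ⟨ζ, η', hζmce, hζη', hζc⟩ := G.mce_factor hsmβ hsαη heq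
      refine ⟨α, hαExtIn, ζ, hζmce, ?_⟩
      rw [hWdef]
      intro hsζ
      have h1 : G.s η' ∈ HI := hher η' (by rw [← hζη']; exact hsζ)
      have h2 : G.s η' = G.s τ := by
        rw [← G.s_comp ζ η' hζη', hζc, ← hc1, G.s_comp l _ hslmβ]
      exact (hWdef τ).mp hτW (h2 ▸ h1)
    have hwW : G.s l ∈ W := (hWdef _).mpr
      (by rw [G.s_vertex hwv]; exact (hWdef l).mp hlW)
    obtain ⟨α₁, hα₁, -⟩ := hexh (G.s l) hwW (G.r_vertex hwv)
    refine ⟨⟨hExtInFin, ?_, ?_, ⟨G.s l, hwv, ?_, hexh⟩⟩, ?_⟩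
    · rintro α ⟨h1, ν, hν, hmce, hcW⟩
      rw [hWdef, ← G.s_comp l α h1]
      exact (hWdef _).mp hcW
    · rintro α ⟨h1, ν, hν, hmce, hcW⟩ hvert
      have hα' : α = G.s l := by rw [h1, G.r_of_vertex α hvert]
      have hlα : G.comp l α = l := by rw [hα', G.comp_id]
      obtain ⟨-, -, ⟨b, hb1, hb2⟩⟩ := hmce
      exact hnoext ⟨ν, hν, b, hb1, by rw [hb2, hlα]⟩
    · rintro α ⟨h1, -⟩
      exact h1.symm
    · intro F' v' hcoe hv' hr'
      have hF' : F' = EW := Finset.coe_injective (hcoe.trans hEW.symm)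
      have hveq : v' = G.s l := (hr' α₁ hα₁).symm.trans hα₁.1.symm
      rw [hF', hveq]
      exact hΔEW
  · -- (S3)
    intro lam lam' hlamF hslam hcompF hne
    have hxF₀ : G.comp lam lam' ∈ F₀ := hmemF₀ hcompF
    have hlamF₀ : lam ∈ F₀ := hmemF₀ hlamF
    have hlamx : lam ≠ G.comp lam lam' := by
      intro he
      have hd := G.d_comp lam lam' hslam
      have hd0 : G.d lam' = 0 := by
        rw [← he] at hd
        funext i
        have := congrFun hd i
        simp only [Pi.add_apply, Pi.zero_apply] at this ⊢
        omega
      exact hne (by rw [← G.r_of_vertex lam' hd0, ← hslam])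
    have hE₀coe : ((F₀.erase (G.comp lam lam') : Finset G.Path) : Set G.Path)
        = F \ {G.comp lam lam'} := by rw [Finset.coe_erase, hF₀]
    have hlamE₀ : lam ∈ F₀.erase (G.comp lam lam') := Finset.mem_erase.mpr ⟨hlamx, hlamF₀⟩
    have hrx : G.r (G.comp lam lam') = v := by
      rw [G.r_comp lam lam' hslam]; exact hrF lam hlamF
    have hkey : (KGraph.qp t v - KGraph.qp t (G.comp lam lam')) *
        (KGraph.qp t v - KGraph.qp t lam) = KGraph.qp t v - KGraph.qp t lam := by
      have e1 := KGraph.q_idem htck (t := t) v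
      have e2 : KGraph.qp t v * KGraph.qp t lam = KGraph.qp t lam := by
        rw [KGraph.qv_eq htck hv]; exact KGraph.tv_mul_q htck (hrF lam hlamF)
      have e3 : KGraph.qp t (G.comp lam lam') * KGraph.qp t v
          = KGraph.qp t (G.comp lam lam') := by
        rw [KGraph.qv_eq htck hv]; exact KGraph.q_mul_tv htck hrx hv
      have e4 := KGraph.q_comp_mul_q htck (t := t) hslam
      rw [sub_mul, mul_sub, mul_sub, e1, e2, e3, e4]
      abel
    have hΔeq : G.Delta t v (F₀.erase (G.comp lam lam')) = G.Delta t v F₀ := by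
      have h1 : F₀ = insert (G.comp lam lam') (F₀.erase (G.comp lam lam')) :=
        (Finset.insert_erase hxF₀).symm
      have h2 : F₀.erase (G.comp lam lam')
          = insert lam ((F₀.erase (G.comp lam lam')).erase lam) :=
        (Finset.insert_erase hlamE₀).symm
      calc G.Delta t v (F₀.erase (G.comp lam lam'))
          = (KGraph.qp t v - KGraph.qp t lam) *
              G.Delta t v ((F₀.erase (G.comp lam lam')).erase lam) := by
            rw [← KGraph.delta_insert htck hFA _ (Finset.notMem_erase lam _), ← h2]
        _ = ((KGraph.qp t v - KGraph.qp t (G.comp lam lam')) *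
              (KGraph.qp t v - KGraph.qp t lam)) *
              G.Delta t v ((F₀.erase (G.comp lam lam')).erase lam) := by rw [hkey]
        _ = (KGraph.qp t v - KGraph.qp t (G.comp lam lam')) *
              G.Delta t v (F₀.erase (G.comp lam lam')) := by
            rw [mul_assoc, ← KGraph.delta_insert htck hFA _ (Finset.notMem_erase lam _), ← h2]
        _ = G.Delta t v F₀ := by
            rw [← KGraph.delta_insert htck hFA _ (Finset.notMem_erase _ _), ← h1]
    refine ⟨⟨?_, ?_, ?_, ⟨v, hv, ?_, ?_⟩⟩, ?_⟩
    · rw [← hE₀coe]; exact (F₀.erase (G.comp lam lam')).finite_toSet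
    · exact Set.diff_subset.trans hFW
    · intro μ hμ; exact hFnv μ hμ.1
    · intro μ hμ; exact hrF μ hμ.1
    · intro m hm hrm
      obtain ⟨ν, hν, τ, hτmce, hτW⟩ := hex₀ m hm hrm
      by_cases hνx : ν = G.comp lam lam'
      · obtain ⟨ζ, hζmce, hζW⟩ := mceW m ν τ lam lam' hτmce hτW hslam hνx.symm
        exact ⟨lam, ⟨hlamF, fun h => hlamx (Set.mem_singleton_iff.mp h)⟩, ζ, hζmce, hζW⟩
      · exact ⟨ν, ⟨hν, fun h => hνx (Set.mem_singleton_iff.mp h)⟩, τ, hτmce, hτW⟩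
    · intro F' v' hcoe hv' hr'
      have hF' : F' = F₀.erase (G.comp lam lam') :=
        Finset.coe_injective (hcoe.trans hE₀coe.symm)
      have hveq : v' = v :=
        (hr' lam ⟨hlamF, fun h => hlamx (Set.mem_singleton_iff.mp h)⟩).symm.trans
          (hrF lam hlamF)
      rw [hF', hveq, hΔeq]
      exact hΔF
  · -- (S4)
    intro lam hlamF Gs hGsB hrGs
    obtain ⟨⟨hGfin, hGW, hGnv, u, hu, hru, hexG⟩, hGdelta⟩ := hGsB
    by_cases hGne : Gs.Nonempty
    swap
    · have hGempty : Gs = ∅ := Set.not_nonempty_iff_eq_empty.mp hGne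
      have hallI : ∀ w', G.IsVertex w' → t w' ∈ I := by
        intro w' hw'
        have h := hGdelta ∅ w' (by rw [Finset.coe_empty, hGempty]) hw'
          (by rw [hGempty]; intro μ hμ; exact absurd hμ (Set.notMem_empty μ))
        rwa [KGraph.delta_empty htck hFA, KGraph.qv_eq htck hw'] at h
      exact absurd
        (show G.s lam ∈ HI by
          rw [hHI]; exact ⟨G.vertex_s lam, hallI _ (G.vertex_s lam)⟩)
        ((hWdef lam).mp (hFW hlamF))
    obtain ⟨μ₁, hμ₁⟩ := hGne
    have huw : u = G.s lam := by rw [← hru μ₁ hμ₁, hrGs μ₁ hμ₁]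
    rw [huw] at hexG
    set G₀ := hGfin.toFinset with hG₀def
    have hG₀ : (G₀ : Set G.Path) = Gs := hGfin.coe_toFinset
    have hmemG₀ : ∀ {μ}, μ ∈ Gs → μ ∈ G₀ := fun {μ} hμ => by
      rw [← Finset.mem_coe, hG₀]; exact hμ
    have hrG₀ : ∀ μ ∈ G₀, G.r μ = G.s lam := fun μ hμ =>
      hrGs μ (by rw [← hG₀]; exact Finset.mem_coe.mpr hμ)
    have hΔG : G.Delta t (G.s lam) G₀ ∈ I :=
      hGdelta G₀ (G.s lam) hG₀ (G.vertex_s lam) hrGs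
    have hrlamv : G.r lam = v := hrF lam hlamF
    have hlamF₀ : lam ∈ F₀ := hmemF₀ hlamF
    have hNcoe : (((F₀.erase lam) ∪ G₀.image (G.comp lam) : Finset G.Path) : Set G.Path)
        = (F \ {lam}) ∪ (G.comp lam) '' Gs := by
      rw [Finset.coe_union, Finset.coe_erase, Finset.coe_image, hF₀, hG₀]
    have hrErase : ∀ μ ∈ F₀.erase lam, G.r μ = v := fun μ hμ =>
      hrF₀ μ (Finset.mem_of_mem_erase hμ)
    have hrImage : ∀ μ ∈ G₀.image (G.comp lam), G.r μ = v := by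
      intro μ hμ
      obtain ⟨μ', hμ', rfl⟩ := Finset.mem_image.mp hμ
      rw [G.r_comp lam μ' (hrG₀ μ' hμ').symm]
      exact hrlamv
    have hΔN : G.Delta t v ((F₀.erase lam) ∪ G₀.image (G.comp lam)) ∈ I := by
      rw [← KGraph.delta_union htck hFA hv hrErase hrImage,
        KGraph.delta_image htck hFA hv hrlamv hrG₀, mul_add]
      refine add_mem ?_ ?_
      · have hcomm : Commute (KGraph.qp t v - KGraph.qp t lam)
            (G.Delta t v (F₀.erase lam)) :=
          (KGraph.delta_comm htck hFA v v _).sub_left (KGraph.delta_comm htck hFA lam v _)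
        have hstep : G.Delta t v (F₀.erase lam) * (t v - KGraph.qp t lam)
            = G.Delta t v F₀ := by
          calc G.Delta t v (F₀.erase lam) * (t v - KGraph.qp t lam)
              = G.Delta t v (F₀.erase lam) * (KGraph.qp t v - KGraph.qp t lam) := by
                rw [KGraph.qv_eq htck hv]
            _ = (KGraph.qp t v - KGraph.qp t lam) * G.Delta t v (F₀.erase lam) :=
                hcomm.eq.symm
            _ = G.Delta t v F₀ := by
                rw [← KGraph.delta_insert htck hFA _ (Finset.notMem_erase lam F₀),
                  Finset.insert_erase hlamF₀]
        rw [hstep]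
        exact hΔF
      · have h1 : t lam * G.Delta t (G.s lam) G₀ ∈ I := (hId (t lam) (htmem lam) _ hΔG).1
        have h2 : t lam * G.Delta t (G.s lam) G₀ * star (t lam) ∈ I :=
          (hId (star (t lam)) (star_mem (htmem lam)) _ h1).2
        exact (hId _ (KGraph.delta_mem_adjoin htck hFA _ _) _ h2).1
    refine ⟨⟨?_, ?_, ?_, ⟨v, hv, ?_, ?_⟩⟩, ?_⟩
    · rw [← hNcoe]; exact ((F₀.erase lam) ∪ G₀.image (G.comp lam)).finite_toSet
    · rintro μ (hd | ⟨μ', hμ', rfl⟩)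
      · exact hFW hd.1
      · rw [hWdef, G.s_comp lam μ' (hrGs μ' hμ').symm]
        exact (hWdef μ').mp (hGW hμ')
    · rintro μ (hd | ⟨μ', hμ', rfl⟩)
      · exact hFnv μ hd.1
      · intro hvert
        have hd := G.d_comp lam μ' (hrGs μ' hμ').symm
        have hd0 : G.d lam = 0 := by
          rw [hvert] at hd
          funext i
          have := congrFun hd i
          simp only [Pi.add_apply, Pi.zero_apply] at this ⊢
          omega
        exact hFnv lam hlamF hd0
    · rintro μ (hd | ⟨μ', hμ', rfl⟩)
      · exact hrF μ hd.1
      · rw [G.r_comp lam μ' (hrGs μ' hμ').symm]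
        exact hrlamv
    · -- exhaustive
      intro m hm hrm
      obtain ⟨ν, hν, τ, hτmce, hτW⟩ := hex₀ m hm hrm
      by_cases hνlam : ν = lam
      · subst hνlam
        obtain ⟨hdτ, ⟨β, hβ1, hβ2⟩, ⟨γ, hγ1, hγ2⟩⟩ := hτmce
        have hγW : γ ∈ W := (hWdef γ).mpr
          (by rw [← G.s_comp ν γ hγ1, hγ2]; exact (hWdef τ).mp hτW)
        obtain ⟨μ, hμGs, ζ, hζmce, hζW⟩ := hexG γ hγW hγ1.symm
        obtain ⟨hdζ, ⟨a, ha1, ha2⟩, ⟨b, hb1, hb2⟩⟩ := hζmce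
        have hsμ : G.s ν = G.r μ := (hrGs μ hμGs).symm
        have hsζν : G.s ν = G.r ζ := by rw [← ha2, G.r_comp γ a ha1]; exact hγ1
        refine ⟨G.comp ν μ, Set.mem_union_right _ ⟨μ, hμGs, rfl⟩, G.comp ν ζ,
          ⟨?_, ?_, ?_⟩, ?_⟩
        · -- degree
          have e2 : G.d τ = G.d ν + G.d γ := by rw [← hγ2, G.d_comp ν γ hγ1]
          rw [G.d_comp ν ζ hsζν, hdζ, G.d_comp ν μ hsμ]
          funext i
          have f1 := congrFun hdτ i
          have f2 := congrFun e2 i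
          simp only [Pi.add_apply, Pi.sup_apply] at f1 f2 ⊢
          omega
        · -- extends m
          have hsβτ : G.s β = G.s τ := by rw [← hβ2, G.s_comp m β hβ1]
          have hsγτ : G.s γ = G.s τ := by rw [← hγ2, G.s_comp ν γ hγ1]
          have hsβa : G.s β = G.r a := by rw [hsβτ, ← hsγτ]; exact ha1
          refine ⟨G.comp β a, ?_, ?_⟩
          · rw [G.r_comp β a hsβa]; exact hβ1
          · rw [← G.comp_assoc m β a hβ1 hsβa, hβ2, ← hγ2,
              G.comp_assoc ν γ a hγ1 ha1, ha2]
        · exact ⟨b, by rw [G.s_comp ν μ hsμ]; exact hb1,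
            by rw [G.comp_assoc ν μ b hsμ hb1, hb2]⟩
        · rw [hWdef, G.s_comp ν ζ hsζν]
          exact (hWdef ζ).mp hζW
      · exact ⟨ν, Set.mem_union_left _ ⟨hν, fun h => hνlam (Set.mem_singleton_iff.mp h)⟩,
          τ, hτmce, hτW⟩
    · intro F' v' hcoe hv' hr'
      have hF' : F' = (F₀.erase lam) ∪ G₀.image (G.comp lam) :=
        Finset.coe_injective (hcoe.trans hNcoe.symm)
      have hveq : v' = v := by
        have hm : G.comp lam μ₁ ∈ (F \ {lam}) ∪ (G.comp lam) '' Gs :=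
          Set.mem_union_right _ ⟨μ₁, hμ₁, rfl⟩
        rw [← hr' _ hm, G.r_comp lam μ₁ (hrGs μ₁ hμ₁).symm]
        exact hrlamv
      rw [hF', hveq]
      exact hΔN
end

section
/- Let Λ be a finitely aligned k-graph, let c be a T-valued 2-cocycle on Λ, let Ε ⊆ FE(Λ) be satiated, let t be a relative Cuntz–Krieger (Λ,c;Ε)-family in a C*-algebra, and let I be a closed two-sided ideal of C*(t). Set H_I := {v ∈ Λ^0 : t_v ∈ I}. Then for every E ∈ Ε with r(E) ∉ H_I, we have Δ(t)^{E \ EH_I} ∈ I; that is, Ε_{H_I} := {E \ EH_I : E ∈ Ε, r(E) ∉ H_I} is contained in {F ∈ FE(Λ \ ΛH_I) : Δ(t)^F ∈ I}. -/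
open scoped BigOperators

/-- `Ε_{H_I} ⊆ B_I`: for `E ∈ Ε` with `r E ∉ H_I`,
`Δ(t)^{E \\ EH_I} ∈ I`. -/
theorem stmt11 {k : ℕ} (G : KGraph k) (hFA : G.FinitelyAligned) (σ : G.Cocycle)
    {A : Type*} [NonUnitalNormedRing A] [StarRing A] [CStarRing A]
    [NormedSpace ℂ A] [IsScalarTower ℂ A A] [SMulCommClass ℂ A A]
    [StarModule ℂ A] [CompleteSpace A]
    (Ε : Set (Set G.Path)) (hΕ : G.Satiated Ε)
    (t : G.Path → A) (ht : G.IsRelCK σ Ε t)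
    (I : Submodule ℂ A) (hIclosed : IsClosed (I : Set A))
    (hIsub : (I : Set A) ⊆ G.cstarOf t)
    (hIabs : ∀ x ∈ G.cstarOf t, ∀ y ∈ I, x * y ∈ I ∧ y * x ∈ I) :
    ∀ HI : Set G.Path, HI = {w | G.IsVertex w ∧ t w ∈ I} →
      ∀ (E : Finset G.Path) (v : G.Path), (E : Set G.Path) ∈ Ε → G.IsVertex v →
        (∀ μ ∈ E, G.r μ = v) → v ∉ HI →
        ∀ F : Finset G.Path,
          (F : Set G.Path) = {μ ∈ (E : Set G.Path) | G.s μ ∉ HI} →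
          G.Delta t v F ∈ I := by
  classical
  intro HI hHI E v hE hv hr _hvH F hF
  obtain ⟨⟨hP, _hOrth, hMul, _hTCK3, hTCK4⟩, hCK⟩ := ht
  set q : G.Path → A := fun l => t l * star (t l) with hqdef
  have hq : ∀ l, q l = t l * star (t l) := fun _ => rfl
  have hsa : ∀ l, star (q l) = q l := by
    intro l; rw [hq, star_mul, star_star]
  have hqv : q v = t v := by
    rw [hq, (hP v hv).1, (hP v hv).2]
  -- MCE is symmetric
  have hMCEsymm : ∀ μ ν, G.MCE μ ν = G.MCE ν μ := by
    intro μ ν; ext l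
    constructor <;> rintro ⟨h1, h2, h3⟩ <;> exact ⟨by rw [h1, sup_comm], h3, h2⟩
  -- range projections commute
  have hcomm : ∀ μ ν, Commute (q μ) (q ν) := by
    intro μ ν
    have h1 := hTCK4 μ ν (hFA μ ν).toFinset ((hFA μ ν).coe_toFinset)
    have h2 := hTCK4 ν μ (hFA μ ν).toFinset
      (by rw [(hFA μ ν).coe_toFinset]; exact hMCEsymm μ ν)
    show q μ * q ν = q ν * q μ
    rw [hq, hq, h1, h2]
  have hqvq : ∀ μ, G.r μ = v → q v * q μ = q μ := by
    intro μ hrμ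
    have hsv : G.s v = G.r μ := by rw [G.s_of_vertex v hv, hrμ]
    have hcmp : G.comp v μ = μ := by rw [← hrμ]; exact G.id_comp μ
    have htv : t v * t μ = t μ := by
      rw [hMul v μ hsv, hcmp, ← hrμ, σ.left_id μ, one_smul]
    rw [hqv, hq, ← mul_assoc, htv]
  have hqqv : ∀ μ, G.r μ = v → q μ * q v = q μ := by
    intro μ hrμ
    have := congrArg star (hqvq μ hrμ)
    rwa [star_mul, hsa, hsa] at this
  have hqvv : q v * q v = q v := hqvq v (G.r_of_vertex v hv)
  -- commuting factors in the unitization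
  have hcommA : ∀ μ ν : G.Path, Commute (q v - q μ) (q v - q ν) := by
    intro μ ν
    exact ((hcomm v v).sub_right (hcomm v ν)).sub_left
      ((hcomm μ v).sub_right (hcomm μ ν))
  have hcommU : ∀ μ ν : G.Path,
      Commute ((q v - q μ : A) : Unitization ℂ A) ((q v - q ν : A) : Unitization ℂ A) := by
    intro μ ν
    have h := hcommA μ ν
    show _ = _
    rw [← Unitization.inr_mul, ← Unitization.inr_mul, h.eq]
  have hpair : ∀ S : Finset G.Path,
      (S : Set G.Path).Pairwise (Function.onFun Commute fun l =>
        ((t v * star (t v) - t l * star (t l) : A) : Unitization ℂ A)) := by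
    intro S x _ y _ _
    exact hcommU x y
  -- unfold Delta
  have hDelta : ∀ S : Finset G.Path, G.Delta t v S =
      (((q v : A) : Unitization ℂ A) *
        S.noncommProd (fun l => ((q v - q l : A) : Unitization ℂ A))
          (by simpa [hq, hqv] using hpair S)).snd := by
    intro S
    rw [KGraph.Delta, dif_pos (hpair S)]
  -- the product lies in (the image of) A
  have hinr : ∀ S : Finset G.Path, ((G.Delta t v S : A) : Unitization ℂ A) =
      ((q v : A) : Unitization ℂ A) *
        S.noncommProd (fun l => ((q v - q l : A) : Unitization ℂ A))
          (by simpa [hq, hqv] using hpair S) := by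
    intro S
    rw [hDelta S]
    set x := ((q v : A) : Unitization ℂ A) *
        S.noncommProd (fun l => ((q v - q l : A) : Unitization ℂ A))
          (by simpa [hq, hqv] using hpair S) with hx
    have hfst : x.fst = 0 := by
      rw [hx, Unitization.fst_mul, Unitization.fst_inr, zero_mul]
    have := Unitization.inl_fst_add_inr_snd_eq x
    rw [hfst] at this
    simpa using this
  have hempty : G.Delta t v (∅ : Finset G.Path) = q v := by
    have := hinr (∅ : Finset G.Path)
    rw [Finset.noncommProd_empty, mul_one] at this
    exact Unitization.inr_injective this
  have hrec : ∀ (l : G.Path) (S : Finset G.Path), l ∉ S →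
      G.Delta t v (insert l S) = G.Delta t v S * (q v - q l) := by
    intro l S hl
    apply Unitization.inr_injective (R := ℂ)
    rw [Unitization.inr_mul, hinr, hinr S,
      Finset.noncommProd_insert_of_notMem _ _ _ _ hl]
    have hcp : Commute ((q v - q l : A) : Unitization ℂ A)
        (S.noncommProd (fun m => ((q v - q m : A) : Unitization ℂ A))
          (by simpa [hq, hqv] using hpair S)) :=
      Finset.noncommProd_commute _ _ _ _ fun x _ => hcommU l x
    rw [← mul_assoc, mul_assoc _ _ (S.noncommProd _ _)]
    rw [hcp.eq, ← mul_assoc, mul_assoc]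
  -- Delta S * q v = Delta S for S ⊆ vΛ
  have hDqv : ∀ S : Finset G.Path, (∀ μ ∈ S, G.r μ = v) →
      G.Delta t v S * q v = G.Delta t v S := by
    intro S
    induction S using Finset.induction_on with
    | empty => intro _; rw [hempty, hqvv]
    | @insert l S hl ih =>
      intro hrS
      rw [hrec l S hl, mul_assoc, sub_mul, hqvv,
        hqqv l (hrS l (Finset.mem_insert_self l S))]
  -- multiplicativity over disjoint unions
  have hmul2 : ∀ T S : Finset G.Path, Disjoint S T → (∀ μ ∈ S, G.r μ = v) →
      G.Delta t v (S ∪ T) = G.Delta t v S * G.Delta t v T := by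
    intro T
    induction T using Finset.induction_on with
    | empty =>
      intro S _ hrS
      rw [Finset.union_empty, hempty, hDqv S hrS]
    | @insert l T hl ih =>
      intro S hdisj hrS
      have hlS : l ∉ S := fun h =>
        (Finset.disjoint_left.mp hdisj h (Finset.mem_insert_self l T))
      have hlST : l ∉ S ∪ T := by
        simp only [Finset.mem_union, not_or]
        exact ⟨hlS, hl⟩
      have hdisj' : Disjoint S T :=
        hdisj.mono_right (Finset.subset_insert l T)
      rw [Finset.union_insert, hrec l (S ∪ T) hlST, ih S hdisj' hrS,
        hrec l T hl, mul_assoc]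
  -- membership in the generated C*-algebra
  have hmemT : ∀ l, t l ∈ NonUnitalStarAlgebra.adjoin ℂ (Set.range t) := by
    intro l
    exact NonUnitalStarAlgebra.subset_adjoin ℂ _ ⟨l, rfl⟩
  have hmemq : ∀ l, q l ∈ NonUnitalStarAlgebra.adjoin ℂ (Set.range t) := by
    intro l
    rw [hq]
    exact mul_mem (hmemT l) (star_mem (hmemT l))
  have hmemD : ∀ S : Finset G.Path,
      G.Delta t v S ∈ NonUnitalStarAlgebra.adjoin ℂ (Set.range t) := by
    intro S
    induction S using Finset.induction_on with
    | empty => rw [hempty]; exact hmemq v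
    | @insert l S hl ih =>
      rw [hrec l S hl]
      exact mul_mem ih (sub_mem (hmemq v) (hmemq l))
  have hcstar : ∀ x, x ∈ NonUnitalStarAlgebra.adjoin ℂ (Set.range t) →
      x ∈ G.cstarOf t := fun x hx => subset_closure hx
  -- q μ ∈ I for s μ ∈ HI
  have hqI : ∀ μ, G.s μ ∈ HI → q μ ∈ I := by
    intro μ hμ
    rw [hHI] at hμ
    obtain ⟨hver, hmem⟩ := hμ
    have hsr : G.s μ = G.r (G.s μ) := (G.r_of_vertex _ hver).symm
    have hc : G.comp μ (G.s μ) = μ := G.comp_id μ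
    have htμ : t μ * t (G.s μ) = t μ := by
      rw [hMul μ (G.s μ) hsr, hc, σ.right_id μ, one_smul]
    have h1 : t (G.s μ) * star (t μ) ∈ I :=
      (hIabs (star (t μ)) (hcstar _ (star_mem (hmemT μ))) _ hmem).2
    have h2 : t μ * (t (G.s μ) * star (t μ)) ∈ I :=
      (hIabs (t μ) (hcstar _ (hmemT μ)) _ h1).1
    have : q μ = t μ * (t (G.s μ) * star (t μ)) := by
      rw [hq, ← mul_assoc, htμ]
    rwa [this]
  -- q v - Delta S ∈ I when all sources in HI
  have hIdiff : ∀ S : Finset G.Path, (∀ μ ∈ S, G.r μ = v) →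
      (∀ μ ∈ S, G.s μ ∈ HI) → q v - G.Delta t v S ∈ I := by
    intro S
    induction S using Finset.induction_on with
    | empty => intro _ _; rw [hempty, sub_self]; exact zero_mem I
    | @insert l S hl ih =>
      intro hrS hsS
      have hrS' : ∀ μ ∈ S, G.r μ = v := fun μ h => hrS μ (Finset.mem_insert_of_mem h)
      have hsS' : ∀ μ ∈ S, G.s μ ∈ HI := fun μ h => hsS μ (Finset.mem_insert_of_mem h)
      have hDql : G.Delta t v S * q l ∈ I :=
        (hIabs _ (hcstar _ (hmemD S)) _ (hqI l (hsS l (Finset.mem_insert_self l S)))).1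
      have heq : q v - G.Delta t v (insert l S) =
          (q v - G.Delta t v S) + G.Delta t v S * q l := by
        rw [hrec l S hl, mul_sub, hDqv S hrS']
        abel
      rw [heq]
      exact add_mem (ih hrS' hsS') hDql
  -- assemble
  have hFE : F ⊆ E := by
    intro μ hμ
    have : (μ : G.Path) ∈ (F : Set G.Path) := hμ
    rw [hF] at this
    exact this.1
  set EH : Finset G.Path := E \ F with hEH
  have hEunion : F ∪ EH = E := Finset.union_sdiff_of_subset hFE
  have hdisj : Disjoint F EH := Finset.disjoint_sdiff
  have hrF : ∀ μ ∈ F, G.r μ = v := fun μ h => hr μ (hFE h)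
  have hrEH : ∀ μ ∈ EH, G.r μ = v := fun μ h => hr μ (Finset.mem_sdiff.mp h).1
  have hsEH : ∀ μ ∈ EH, G.s μ ∈ HI := by
    intro μ h
    obtain ⟨hE', hF'⟩ := Finset.mem_sdiff.mp h
    by_contra hc
    exact hF' (by
      have : (μ : G.Path) ∈ (F : Set G.Path) := by rw [hF]; exact ⟨hE', hc⟩
      exact this)
  have hDE : G.Delta t v E = 0 := hCK E v hE hv hr
  have hsplit : G.Delta t v F * G.Delta t v EH = 0 := by
    rw [← hmul2 EH F hdisj hrF, hEunion, hDE]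
  have hkey : G.Delta t v F = G.Delta t v F * (q v - G.Delta t v EH) := by
    rw [mul_sub, hsplit, sub_zero, hDqv F hrF]
  rw [hkey]
  exact (hIabs _ (hcstar _ (hmemD F)) _ (hIdiff EH hrEH hsEH)).1
end

section
/- Let Λ be a finitely aligned k-graph, let b : Λ^0 → ℤ^k satisfy d(λ) = b(s(λ)) − b(r(λ)) for all λ ∈ Λ, let c be a T-valued 2-cocycle on Λ, and let t be a Toeplitz–Cuntz–Krieger (Λ,c)-family in a C*-algebra with t_v ≠ 0 for every v ∈ Λ^0. Fix n ∈ ℤ^k. Then the elements {t_μ t_ν* : μ, ν ∈ Λ, s(μ) = s(ν), b(s(μ)) = n} are nonzero matrix units: each t_μ t_ν* ≠ 0, and for μ, ν, η, ζ with s(μ) = s(ν), s(η) = s(ζ) and b(s(μ)) = b(s(η)) = n, one has (t_μ t_ν*)(t_η t_ζ*) = t_μ t_ζ* if ν = η and (t_μ t_ν*)(t_η t_ζ*) = 0 if ν ≠ η. -/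
open scoped BigOperators

/-- with a grading `b : Λ⁰ → ℤ^k` of the degree map, the
`t_μ t_ν*` with `b(s μ) = b(s ν) = n` are nonzero matrix units. -/
theorem stmt12 {k : ℕ} (G : KGraph k) (hFA : G.FinitelyAligned) (σ : G.Cocycle)
    {A : Type*} [NonUnitalNormedRing A] [StarRing A] [CStarRing A]
    [NormedSpace ℂ A] [IsScalarTower ℂ A A] [SMulCommClass ℂ A A]
    [StarModule ℂ A] [CompleteSpace A]
    (t : G.Path → A) (ht : G.IsTCK σ t)
    (hnz : ∀ v : G.Path, G.IsVertex v → t v ≠ 0)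
    (b : G.Path → (Fin k → ℤ)) (hb : ∀ l : G.Path, G.dZ l = b (G.s l) - b (G.r l))
    (n : Fin k → ℤ) :
    (∀ μ ν : G.Path, G.s μ = G.s ν → b (G.s μ) = n → t μ * star (t ν) ≠ 0) ∧
    (∀ μ ν η ζ : G.Path, G.s μ = G.s ν → G.s η = G.s ζ →
      b (G.s μ) = n → b (G.s η) = n →
      ((ν = η → (t μ * star (t ν)) * (t η * star (t ζ)) = t μ * star (t ζ)) ∧
       (ν ≠ η → (t μ * star (t ν)) * (t η * star (t ζ)) = 0))) := by
  obtain ⟨h1, h2, h3, h4, h5⟩ := ht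
  have hsr : ∀ l : G.Path, G.s l = G.r (G.s l) := fun l =>
    (G.r_of_vertex _ (G.d_s l)).symm
  have hts : ∀ l : G.Path, t l * t (G.s l) = t l := by
    intro l
    rw [h3 l (G.s l) (hsr l), σ.right_id, G.comp_id, one_smul]
  have hstar_v : ∀ l : G.Path, star (t (G.s l)) = t (G.s l) := fun l =>
    (h1 _ (G.d_s l)).1
  have e1 : ∀ l : G.Path, star (t l) * (t l * star (t l)) = star (t l) := by
    intro l
    rw [← mul_assoc, h4, ← hstar_v, ← star_mul, hts]
  have e2 : ∀ l : G.Path, (t l * star (t l)) * t l = t l := by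
    intro l
    rw [mul_assoc, h4, hts]
  have e3 : ∀ l : G.Path, t (G.s l) * star (t l) = star (t l) := by
    intro l
    rw [← hstar_v, ← star_mul, hts]
  -- MCE(ν, η) = ∅ when ν ≠ η but b(s ν) = b(s η)
  have hMCE : ∀ ν η : G.Path, b (G.s ν) = b (G.s η) → ν ≠ η → G.MCE ν η = ∅ := by
    intro ν η hbe hne
    ext l
    simp only [KGraph.MCE, Set.mem_setOf_eq, Set.mem_empty_iff_false, iff_false]
    rintro ⟨hd, ⟨α, hα, rfl⟩, ⟨β, hβ, hβ2⟩⟩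
    apply hne
    have hdα : G.dZ α = b (G.s (G.comp ν α)) - b (G.s ν) := by
      rw [hb α, G.s_comp ν α hα, ← hα]
    have hdβ : G.dZ β = b (G.s (G.comp ν α)) - b (G.s η) := by
      rw [hb β, ← hβ2, G.s_comp η β hβ, ← hβ]
    have hdαβ : G.d α = G.d β := by
      have hz : G.dZ α = G.dZ β := by rw [hdα, hdβ, hbe]
      funext i
      have := congrFun hz i
      simp only [KGraph.dZ] at this
      exact_mod_cast this
    have hdc : G.d (G.comp ν α) = G.d ν + G.d α := G.d_comp ν α hα
    have hdc' : G.d (G.comp ν α) = G.d η + G.d β := by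
      rw [← hβ2]; exact G.d_comp η β hβ
    have hνη : G.d ν = G.d η := by
      have : G.d ν + G.d α = G.d η + G.d α := by
        rw [← hdc, hdc', hdαβ]
      funext i
      have := congrFun this i
      simpa using this
    have hdl : G.d (G.comp ν α) = G.d ν := by
      rw [hd, hνη, sup_idem]
    have hα0 : G.d α = 0 := by
      have : G.d ν + G.d α = G.d ν + 0 := by rw [add_zero, ← hdc, hdl]
      exact add_left_cancel this
    have hβ0 : G.d β = 0 := by rw [← hdαβ]; exact hα0
    have hαv : α = G.s ν := by rw [hα, G.r_of_vertex α hα0]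
    have hβv : β = G.s η := by rw [hβ, G.r_of_vertex β hβ0]
    have h1' : G.comp ν α = ν := by rw [hαv, G.comp_id]
    have h2' : G.comp ν α = η := by rw [← hβ2, hβv, G.comp_id]
    rw [← h1', h2']
  have hq0 : ∀ ν η : G.Path, b (G.s ν) = b (G.s η) → ν ≠ η →
      (t ν * star (t ν)) * (t η * star (t η)) = 0 := by
    intro ν η hbe hne
    have := h5 ν η ∅ (by rw [hMCE ν η hbe hne]; simp)
    simpa using this
  have hst0 : ∀ ν η : G.Path, b (G.s ν) = b (G.s η) → ν ≠ η →
      star (t ν) * t η = 0 := by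
    intro ν η hbe hne
    calc star (t ν) * t η
        = (star (t ν) * (t ν * star (t ν))) * ((t η * star (t η)) * t η) := by
          rw [e1, e2]
      _ = star (t ν) * (((t ν * star (t ν)) * (t η * star (t η))) * t η) := by
          simp only [mul_assoc]
      _ = 0 := by rw [hq0 ν η hbe hne, zero_mul, mul_zero]
  constructor
  · intro μ ν hs _ h0
    have key : star (t μ * star (t ν)) * (t μ * star (t ν)) = t ν * star (t ν) := by
      calc star (t μ * star (t ν)) * (t μ * star (t ν))
          = t ν * ((star (t μ) * t μ) * star (t ν)) := by
            simp only [star_mul, star_star, mul_assoc]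
        _ = t ν * star (t ν) := by rw [h4, hs, e3]
    have hv : t (G.s ν) ≠ 0 := hnz _ (G.d_s ν)
    have htν : t ν ≠ 0 := by
      intro h0'
      exact hv (by rw [← h4 ν, h0', mul_zero])
    have : t ν * star (t ν) = 0 := by rw [← key, h0, mul_zero]
    exact htν ((CStarRing.mul_star_self_eq_zero_iff (t ν)).mp this)
  · intro μ ν η ζ hμν hηζ hb1 hb2
    constructor
    · intro hνη
      subst hνη
      calc (t μ * star (t ν)) * (t ν * star (t ζ))
          = t μ * ((star (t ν) * t ν) * star (t ζ)) := by simp only [mul_assoc]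
        _ = t μ * star (t ζ) := by rw [h4, hηζ, e3]
    · intro hne
      have hbe : b (G.s ν) = b (G.s η) := by rw [← hμν, hb1, hb2]
      calc (t μ * star (t ν)) * (t η * star (t ζ))
          = t μ * ((star (t ν) * t η) * star (t ζ)) := by simp only [mul_assoc]
        _ = 0 := by rw [hst0 ν η hbe hne, zero_mul, mul_zero]
end

section
/- Let Λ be a finitely aligned k-graph, let b : Λ^0 → ℤ^k satisfy d(λ) = b(s(λ)) − b(r(λ)) for all λ ∈ Λ, let c be a T-valued 2-cocycle on Λ, and let t be a Toeplitz–Cuntz–Krieger (Λ,c)-family in a C*-algebra. If μ, ν, η, ζ ∈ Λ with s(μ) = s(ν) and s(η) = s(ζ), then (t_μ t_ν*)(t_η t_ζ*) lies in the closed linear span of {t_α t_β* : α, β ∈ Λ, s(α) = s(β), b(s(α)) = b(s(μ)) ∨ b(s(η))}. -/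
open scoped BigOperators

/-- `(t_μ t_ν*)(t_η t_ζ*)` lies in the closed linear span of the
`t_α t_β*` with `b(s α) = b(s μ) ∨ b(s η)`. -/
theorem stmt13 {k : ℕ} (G : KGraph k) (hFA : G.FinitelyAligned) (σ : G.Cocycle)
    {A : Type*} [NonUnitalNormedRing A] [StarRing A] [CStarRing A]
    [NormedSpace ℂ A] [IsScalarTower ℂ A A] [SMulCommClass ℂ A A]
    [StarModule ℂ A] [CompleteSpace A]
    (t : G.Path → A) (ht : G.IsTCK σ t)
    (b : G.Path → (Fin k → ℤ)) (hb : ∀ l : G.Path, G.dZ l = b (G.s l) - b (G.r l))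
    (μ ν η ζ : G.Path) (h1 : G.s μ = G.s ν) (h2 : G.s η = G.s ζ) :
    (t μ * star (t ν)) * (t η * star (t ζ)) ∈
      closure (↑(Submodule.span ℂ
        {x : A | ∃ α β : G.Path, G.s α = G.s β ∧
          b (G.s α) = b (G.s μ) ⊔ b (G.s η) ∧ x = t α * star (t β)}) : Set A) := by
  classical
  obtain ⟨hproj, -, hmul, hiso, hMCE⟩ := ht
  -- basic vertex facts
  have hvert_s : ∀ l, G.IsVertex (G.s l) := fun l => G.d_s l
  have hvert_r : ∀ l, G.IsVertex (G.r l) := fun l => G.d_r l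
  have htv : ∀ l, t l * t (G.s l) = t l := by
    intro l
    have hsr : G.s l = G.r (G.s l) := (G.r_of_vertex _ (G.d_s l)).symm
    rw [hmul l (G.s l) hsr, G.comp_id, σ.right_id, one_smul]
  have hvt : ∀ l, t (G.r l) * t l = t l := by
    intro l
    have hsr : G.s (G.r l) = G.r l := G.s_of_vertex _ (G.d_r l)
    rw [hmul (G.r l) l hsr, G.id_comp, σ.left_id, one_smul]
  have hpi : ∀ l, t l * star (t l) * t l = t l := by
    intro l; rw [mul_assoc, hiso, htv]
  have hpi' : ∀ l, star (t l) * (t l * star (t l)) = star (t l) := by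
    intro l
    have := congrArg star (hpi l)
    simpa [star_mul, mul_assoc] using this
  have hcc : ∀ p q, G.s p = G.r q → (starRingEnd ℂ) (σ.c p q) * σ.c p q = 1 := by
    intro p q h
    have hn := σ.norm_one p q h
    have : σ.c p q * (starRingEnd ℂ) (σ.c p q) = ((‖σ.c p q‖ : ℝ) : ℂ) ^ 2 := by
      rw [Complex.mul_conj']
    rw [mul_comm, this, hn]; norm_num
  have key1 : ∀ p q, G.s p = G.r q →
      star (t p) * t (G.comp p q) = (starRingEnd ℂ) (σ.c p q) • t q := by
    intro p q h
    have h2 : star (t p) * (σ.c p q • t (G.comp p q)) = t q := by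
      rw [← hmul p q h, ← mul_assoc, hiso, h, hvt]
    calc star (t p) * t (G.comp p q)
        = ((starRingEnd ℂ) (σ.c p q) * σ.c p q) • (star (t p) * t (G.comp p q)) := by
          rw [hcc p q h, one_smul]
      _ = (starRingEnd ℂ) (σ.c p q) • (star (t p) * (σ.c p q • t (G.comp p q))) := by
          rw [mul_smul]; congr 1; rw [mul_smul_comm]
      _ = (starRingEnd ℂ) (σ.c p q) • t q := by rw [h2]
  have key2 : ∀ p q, G.s p = G.r q →
      star (t (G.comp p q)) * t p = σ.c p q • star (t q) := by
    intro p q h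
    have := congrArg star (key1 p q h)
    simpa [star_mul, star_smul, Complex.conj_conj] using this
  -- the MCE finset
  set F : Finset G.Path := (hFA ν η).toFinset with hF
  have hFcoe : (F : Set G.Path) = G.MCE ν η := Set.Finite.coe_toFinset _
  have hsum : (t ν * star (t ν)) * (t η * star (t η)) = ∑ l ∈ F, t l * star (t l) :=
    hMCE ν η F hFcoe
  have expand : star (t ν) * t η = ∑ l ∈ F, star (t ν) * (t l * star (t l)) * t η := by
    calc star (t ν) * t η
        = (star (t ν) * (t ν * star (t ν))) * ((t η * star (t η)) * t η) := by
          rw [hpi', hpi]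
      _ = star (t ν) * ((t ν * star (t ν)) * (t η * star (t η))) * t η := by
          simp [mul_assoc]
      _ = star (t ν) * (∑ l ∈ F, t l * star (t l)) * t η := by rw [hsum]
      _ = ∑ l ∈ F, star (t ν) * (t l * star (t l)) * t η := by
          rw [Finset.mul_sum, Finset.sum_mul]
  have main : (t μ * star (t ν)) * (t η * star (t ζ)) =
      ∑ l ∈ F, t μ * (star (t ν) * (t l * star (t l)) * t η) * star (t ζ) := by
    calc (t μ * star (t ν)) * (t η * star (t ζ))
        = t μ * (star (t ν) * t η) * star (t ζ) := by simp [mul_assoc]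
      _ = t μ * (∑ l ∈ F, star (t ν) * (t l * star (t l)) * t η) * star (t ζ) := by
          rw [expand]
      _ = ∑ l ∈ F, t μ * (star (t ν) * (t l * star (t l)) * t η) * star (t ζ) := by
          rw [Finset.mul_sum, Finset.sum_mul]
  rw [main]
  apply subset_closure
  refine Submodule.sum_mem _ ?_
  intro l hl
  have hlM : l ∈ G.MCE ν η := by rw [← hFcoe]; exact_mod_cast hl
  obtain ⟨hdl, ⟨α, hα1, hα2⟩, ⟨β, hβ1, hβ2⟩⟩ := hlM
  -- rewrite the summand
  have hμα : G.s μ = G.r α := h1.trans hα1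
  have hζβ : G.s ζ = G.r β := h2.symm.trans hβ1
  have e1 : star (t ν) * t l = (starRingEnd ℂ) (σ.c ν α) • t α := by
    rw [← hα2]; exact key1 ν α hα1
  have e2 : star (t l) * t η = σ.c η β • star (t β) := by
    rw [← hβ2]; exact key2 η β hβ1
  have e3 : t μ * t α = σ.c μ α • t (G.comp μ α) := hmul μ α hμα
  have e4 : star (t β) * star (t ζ) = (starRingEnd ℂ) (σ.c ζ β) • star (t (G.comp ζ β)) := by
    rw [← star_mul, hmul ζ β hζβ, star_smul]; rfl
  have hterm : t μ * (star (t ν) * (t l * star (t l)) * t η) * star (t ζ) =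
      ((starRingEnd ℂ) (σ.c ν α) * σ.c η β * σ.c μ α * (starRingEnd ℂ) (σ.c ζ β)) •
        (t (G.comp μ α) * star (t (G.comp ζ β))) := by
    have : star (t ν) * (t l * star (t l)) * t η =
        (star (t ν) * t l) * (star (t l) * t η) := by simp [mul_assoc]
    rw [this, e1, e2, smul_mul_smul_comm]
    have h5 : t μ * (t α * star (t β)) * star (t ζ) =
        (σ.c μ α * (starRingEnd ℂ) (σ.c ζ β)) •
          (t (G.comp μ α) * star (t (G.comp ζ β))) := by
      have h6 : t μ * (t α * star (t β)) * star (t ζ) =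
          (t μ * t α) * (star (t β) * star (t ζ)) := by simp [mul_assoc]
      rw [h6, e3, e4, smul_mul_smul_comm]
    rw [mul_smul_comm, smul_mul_assoc, h5, smul_smul]
    congr 1
    ring
  rw [hterm]
  refine Submodule.smul_mem _ _ (Submodule.subset_span ?_)
  -- now the combinatorial part
  have hsα : G.s α = G.s l := by rw [← hα2, G.s_comp ν α hα1]
  have hsβ : G.s β = G.s l := by rw [← hβ2, G.s_comp η β hβ1]
  have hrν : G.r l = G.r ν := by rw [← hα2, G.r_comp ν α hα1]
  have hrη : G.r l = G.r η := by rw [← hβ2, G.r_comp η β hβ1]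
  have hsμα : G.s (G.comp μ α) = G.s l := by rw [G.s_comp μ α hμα, hsα]
  have hsζβ : G.s (G.comp ζ β) = G.s l := by rw [G.s_comp ζ β hζβ, hsβ]
  refine ⟨G.comp μ α, G.comp ζ β, hsμα.trans hsζβ.symm, ?_, rfl⟩
  rw [hsμα]
  funext i
  have hbl := congrFun (hb l) i
  have hbν := congrFun (hb ν) i
  have hbη := congrFun (hb η) i
  simp only [KGraph.dZ, Pi.sub_apply] at hbl hbν hbη
  have hd : (G.d l i : ℤ) = max (G.d ν i) (G.d η i) := by
    rw [hdl]; simp [Pi.sup_apply, Nat.cast_max]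
  rw [hd, hrν] at hbl
  have hrr : b (G.r η) i = b (G.r ν) i := by rw [← hrη, hrν]
  rw [hrr] at hbη
  rw [Nat.cast_max] at hbl
  rw [Pi.sup_apply, h1]
  rcases le_total ((G.d ν i : ℤ)) ((G.d η i : ℤ)) with hle | hle
  · rw [max_eq_right hle] at hbl
    rw [max_eq_right (by omega : b (G.s ν) i ≤ b (G.s η) i)]
    omega
  · rw [max_eq_left hle] at hbl
    rw [max_eq_left (by omega : b (G.s η) i ≤ b (G.s ν) i)]
    omega
end

section
/- Let Λ be a row-finite k-graph with no sources, and suppose μ, ν ∈ Λ satisfy s(μ) = s(ν) and μ ∼ ν. Then MCE(μ,ν) = μΛ ∩ Λ^{d(μ)∨d(ν)} = νΛ ∩ Λ^{d(μ)∨d(ν)}. -/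
open scoped BigOperators

namespace KGraph

variable {k : ℕ} (G : KGraph k)

lemma d_sub_add {l : G.Path} {m : Fin k → ℕ} (h : m ≤ G.d l) :
    G.d l = m + (G.d l - m) := by
  funext i
  have h' : m i ≤ G.d l i := h i
  simp only [Pi.add_apply, Pi.sub_apply]
  omega

noncomputable def seg_s14 (l : G.Path) (m : Fin k → ℕ) (h : m ≤ G.d l) : G.Path × G.Path :=
  (G.factor l m (G.d l - m) (G.d_sub_add h)).choose

lemma seg_spec (l : G.Path) (m : Fin k → ℕ) (h : m ≤ G.d l) :
    G.d (G.seg_s14 l m h).1 = m ∧ G.d (G.seg_s14 l m h).2 = G.d l - m ∧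
    G.s (G.seg_s14 l m h).1 = G.r (G.seg_s14 l m h).2 ∧
    G.comp (G.seg_s14 l m h).1 (G.seg_s14 l m h).2 = l :=
  (G.factor l m (G.d l - m) (G.d_sub_add h)).choose_spec.1

lemma seg_eq (l : G.Path) (m : Fin k → ℕ) (h : m ≤ G.d l) {x y : G.Path}
    (hx : G.d x = m) (hxy : G.s x = G.r y) (hc : G.comp x y = l) :
    (x, y) = G.seg_s14 l m h := by
  have hy : G.d y = G.d l - m := by
    have h2 := G.d_comp x y hxy
    rw [hc] at h2
    funext i
    have := congrFun h2 i
    simp only [Pi.add_apply, Pi.sub_apply] at this ⊢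
    rw [congrFun hx i] at this
    omega
  exact (G.factor l m (G.d l - m) (G.d_sub_add h)).choose_spec.2 (x, y) ⟨hx, hy, hxy, hc⟩

lemma seg_prefix {l η γ : G.Path} {m : Fin k → ℕ} (hc : G.s η = G.r γ)
    (hl : G.comp η γ = l) (h1 : G.d η ≤ m) (h2 : m ≤ G.d l) :
    ∃ δ, G.s η = G.r δ ∧ G.comp η δ = (G.seg_s14 l m h2).1 := by
  obtain ⟨hd1, hd2, hs12, hc12⟩ := G.seg_spec l m h2
  have h1' : G.d η ≤ G.d (G.seg_s14 l m h2).1 := le_of_le_of_eq h1 hd1.symm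
  obtain ⟨ha, hb, hab, hcab⟩ := G.seg_spec (G.seg_s14 l m h2).1 (G.d η) h1'
  set a := (G.seg_s14 (G.seg_s14 l m h2).1 (G.d η) h1').1 with ha_def
  set b := (G.seg_s14 (G.seg_s14 l m h2).1 (G.d η) h1').2 with hb_def
  have hsb : G.s b = G.r (G.seg_s14 l m h2).2 := by
    have h3 := G.s_comp a b hab
    rw [hcab] at h3
    exact h3.symm.trans hs12
  have h12 : G.d η ≤ G.d l := h1.trans h2
  have key1 : (η, γ) = G.seg_s14 l (G.d η) h12 := G.seg_eq l (G.d η) h12 rfl hc hl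
  have key2 : (a, G.comp b (G.seg_s14 l m h2).2) = G.seg_s14 l (G.d η) h12 := by
    refine G.seg_eq l (G.d η) h12 ha ?_ ?_
    · rw [G.r_comp b _ hsb]; exact hab
    · rw [← G.comp_assoc a b _ hab hsb, hcab, hc12]
  have hηa : η = a := by
    have := key1.trans key2.symm
    exact congrArg Prod.fst this
  refine ⟨b, ?_, ?_⟩
  · rw [hηa]; exact hab
  · rw [hηa]; exact hcab

lemma exists_ext1 (hrf : G.RowFiniteNoSources) (l : G.Path) :
    ∃ ε, G.r ε = G.s l ∧ G.d ε = fun _ => 1 :=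
  (hrf (G.s l) (G.d_s l) (fun _ => 1)).2

noncomputable def chain (hrf : G.RowFiniteNoSources) (α : G.Path) : ℕ → G.Path
  | 0 => α
  | n + 1 => G.comp (chain hrf α n) (G.exists_ext1 hrf (chain hrf α n)).choose

lemma chain_comp (hrf : G.RowFiniteNoSources) (α : G.Path) (n : ℕ) :
    G.s (G.chain hrf α n) = G.r ((G.exists_ext1 hrf (G.chain hrf α n)).choose) :=
  ((G.exists_ext1 hrf _).choose_spec.1).symm

lemma chain_d (hrf : G.RowFiniteNoSources) (α : G.Path) (n : ℕ) :
    G.d (G.chain hrf α n) = fun i => G.d α i + n := by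
  induction n with
  | zero => funext i; simp [chain]
  | succ n ih =>
    rw [show G.chain hrf α (n + 1) = G.comp (G.chain hrf α n)
        (G.exists_ext1 hrf (G.chain hrf α n)).choose from rfl]
    rw [G.d_comp _ _ (G.chain_comp hrf α n), ih,
      (G.exists_ext1 hrf (G.chain hrf α n)).choose_spec.2]
    funext i
    simp [Pi.add_apply]
    ring

lemma prefix_trans {x y z a b : G.Path} (h1 : G.s x = G.r a) (h2 : G.comp x a = y)
    (h3 : G.s y = G.r b) (h4 : G.comp y b = z) :
    G.s x = G.r (G.comp a b) ∧ G.comp x (G.comp a b) = z := by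
  have hab : G.s a = G.r b := by rw [← G.s_comp x a h1, h2]; exact h3
  refine ⟨by rw [G.r_comp a b hab]; exact h1, ?_⟩
  rw [← G.comp_assoc x a b h1 hab, h2, h4]

lemma chain_prefix (hrf : G.RowFiniteNoSources) (α : G.Path) {m n : ℕ} (h : m ≤ n) :
    ∃ γ, G.s (G.chain hrf α m) = G.r γ ∧ G.comp (G.chain hrf α m) γ = G.chain hrf α n := by
  induction n, h using Nat.le_induction with
  | base =>
    exact ⟨G.s (G.chain hrf α m),
      (G.r_of_vertex _ (G.d_s _)).symm, G.comp_id _⟩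
  | succ n hmn ih =>
    obtain ⟨γ, h1, h2⟩ := ih
    obtain ⟨h3, h4⟩ := G.prefix_trans h1 h2 (G.chain_comp hrf α n)
      (rfl : G.comp (G.chain hrf α n) _ = G.chain hrf α (n + 1))
    exact ⟨_, h3, h4⟩

lemma d_le_of_prefix {x a y : G.Path} (h1 : G.s x = G.r a) (h2 : G.comp x a = y) :
    G.d x ≤ G.d y := by
  have := G.d_comp x a h1
  rw [h2] at this
  intro i
  rw [congrFun this i]
  exact Nat.le_add_right _ _

lemma exists_ultrafilter (hrf : G.RowFiniteNoSources) (α : G.Path) :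
    ∃ S, G.IsUltrafilter S ∧ α ∈ S ∧ G.r α ∈ S := by
  refine ⟨{η | ∃ n γ, G.s η = G.r γ ∧ G.comp η γ = G.chain hrf α n}, ⟨⟨?_, ?_⟩, ?_⟩, ?_, ?_⟩
  · -- F1
    rintro l ⟨a, hla, n, γ, h1, h2⟩
    have h1' : G.s a = G.r γ := by rw [← G.s_comp l a hla]; exact h1
    obtain ⟨h3, h4⟩ := G.prefix_trans hla rfl h1 h2
    exact ⟨n, _, h3, h4⟩
  · -- F2
    rintro p ⟨m, γp, hp1, hp2⟩ q ⟨n, γq, hq1, hq2⟩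
    set N := max m n with hN
    obtain ⟨δp, hδp1, hδp2⟩ := G.chain_prefix hrf α (le_max_left m n)
    obtain ⟨δq, hδq1, hδq2⟩ := G.chain_prefix hrf α (le_max_right m n)
    obtain ⟨hep1, hep2⟩ := G.prefix_trans hp1 hp2 hδp1 hδp2
    obtain ⟨heq1, heq2⟩ := G.prefix_trans hq1 hq2 hδq1 hδq2
    have hple : G.d p ≤ G.d (G.chain hrf α N) := G.d_le_of_prefix hep1 hep2
    have hqle : G.d q ≤ G.d (G.chain hrf α N) := G.d_le_of_prefix heq1 heq2
    have hsup : G.d p ⊔ G.d q ≤ G.d (G.chain hrf α N) := sup_le hple hqle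
    obtain ⟨hd1, hd2, hs12, hc12⟩ := G.seg_spec (G.chain hrf α N) (G.d p ⊔ G.d q) hsup
    refine ⟨(G.seg_s14 (G.chain hrf α N) (G.d p ⊔ G.d q) hsup).1, ⟨⟨hd1, ?_, ?_⟩, N, _, hs12, hc12⟩⟩
    · exact G.seg_prefix hep1 hep2 le_sup_left hsup
    · exact G.seg_prefix heq1 heq2 le_sup_right hsup
  · -- ultrafilter
    intro n
    set N := Finset.univ.sup n with hNdef
    have hle : n ≤ G.d (G.chain hrf α N) := by
      intro i
      rw [congrFun (G.chain_d hrf α N) i]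
      exact le_add_self.trans (Nat.add_le_add_left (Finset.le_sup (Finset.mem_univ i)) _)
    obtain ⟨hd1, hd2, hs12, hc12⟩ := G.seg_spec (G.chain hrf α N) n hle
    exact ⟨_, ⟨N, _, hs12, hc12⟩, hd1⟩
  · exact ⟨0, G.s α, (G.r_of_vertex _ (G.d_s α)).symm, G.comp_id α⟩
  · exact ⟨0, α, G.s_of_vertex _ (G.d_r α), G.id_comp α⟩

lemma key (hrf : G.RowFiniteNoSources) {μ ν : G.Path} (hs : G.s μ = G.s ν)
    (hsim : ∀ S, G.IsUltrafilter S → G.s μ ∈ S → G.lmap μ S = G.lmap ν S)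
    {l : G.Path} (hd : G.d l = G.d μ ⊔ G.d ν)
    (hα : ∃ α, G.s μ = G.r α ∧ G.comp μ α = l) :
    ∃ β, G.s ν = G.r β ∧ G.comp ν β = l := by
  obtain ⟨α, hα1, hα2⟩ := hα
  obtain ⟨S, hS, hαS, hrS⟩ := G.exists_ultrafilter hrf α
  have hvS : G.s μ ∈ S := by rw [hα1]; exact hrS
  have hν : ν ∈ G.lmap ν S := by
    refine ⟨G.s ν, by rw [← hs]; exact hvS, (G.r_of_vertex _ (G.d_s ν)).symm,
      G.s ν, (G.r_of_vertex _ (G.d_s ν)).symm, rfl⟩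
  have hν' : ν ∈ G.lmap μ S := by rw [hsim S hS hvS]; exact hν
  obtain ⟨τ, hτS, hμτ, β, hνβ, hββ⟩ := hν'
  obtain ⟨ρ, ⟨hdρ, ⟨γ, hτγ, hργ⟩, ⟨δ, hαδ, hρδ⟩⟩, hρS⟩ := hS.1.2 τ hτS α hαS
  have hβγ : G.s β = G.r γ := by
    have e1 := G.s_comp ν β hνβ
    rw [hββ] at e1
    exact e1.symm.trans ((G.s_comp μ τ hμτ).trans hτγ)
  have hνβγ : G.s ν = G.r (G.comp β γ) := by rw [G.r_comp β γ hβγ]; exact hνβ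
  have hμρ : G.s μ = G.r ρ := by rw [← hργ, G.r_comp τ γ hτγ]; exact hμτ
  -- L := comp μ ρ
  have hLν : G.comp ν (G.comp β γ) = G.comp μ ρ := by
    rw [← hργ, ← G.comp_assoc μ τ γ hμτ hτγ, ← hββ, G.comp_assoc ν β γ hνβ hβγ]
  have hνle : G.d ν ≤ G.d l := by rw [hd]; exact le_sup_right
  obtain ⟨hx1, hx2, hx3, hx4⟩ := G.seg_spec l (G.d ν) hνle
  set x := (G.seg_s14 l (G.d ν) hνle).1 with hxdef
  set y := (G.seg_s14 l (G.d ν) hνle).2 with hydef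
  have hyδ : G.s y = G.r δ := by
    have e1 := G.s_comp x y hx3
    rw [hx4] at e1
    rw [← hα2, G.s_comp μ α hα1] at e1
    exact e1.symm.trans hαδ
  have hLx : G.comp x (G.comp y δ) = G.comp μ ρ := by
    rw [← G.comp_assoc x y δ hx3 hyδ, hx4, hα2.symm, ← hρδ,
      G.comp_assoc μ α δ hα1 hαδ]
  have hdνL : G.d ν ≤ G.d (G.comp μ ρ) := by
    have e1 : G.d (G.comp μ ρ) = G.d ν + G.d (G.comp β γ) := by
      rw [← hLν]; exact G.d_comp ν _ hνβγ
    rw [e1]; exact le_self_add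
  have key1 : (ν, G.comp β γ) = G.seg_s14 (G.comp μ ρ) (G.d ν) hdνL :=
    G.seg_eq _ _ hdνL rfl hνβγ hLν
  have key2 : (x, G.comp y δ) = G.seg_s14 (G.comp μ ρ) (G.d ν) hdνL := by
    refine G.seg_eq _ _ hdνL hx1 ?_ hLx
    rw [G.r_comp y δ hyδ]; exact hx3
  have hνx : ν = x := congrArg Prod.fst (key1.trans key2.symm)
  exact ⟨y, by rw [hνx]; exact hx3, by rw [hνx]; exact hx4⟩

end KGraph

/-- if `μ ∼ ν` then `MCE(μ,ν) = μΛ ∩ Λ^{dμ∨dν} = νΛ ∩ Λ^{dμ∨dν}`. -/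
theorem stmt14 {k : ℕ} (G : KGraph k) (hrf : G.RowFiniteNoSources)
    (μ ν : G.Path) (hs : G.s μ = G.s ν) (hsim : G.PEquiv μ ν) :
    G.MCE μ ν =
      {l | G.d l = G.d μ ⊔ G.d ν ∧ ∃ α, G.s μ = G.r α ∧ G.comp μ α = l} ∧
    G.MCE μ ν =
      {l | G.d l = G.d μ ⊔ G.d ν ∧ ∃ β, G.s ν = G.r β ∧ G.comp ν β = l} := by
  have kd : ∀ l : G.Path, G.d l = G.d μ ⊔ G.d ν →
      (∃ α, G.s μ = G.r α ∧ G.comp μ α = l) →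
      ∃ β, G.s ν = G.r β ∧ G.comp ν β = l :=
    fun l hd hα => G.key hrf hs hsim hd hα
  have kd' : ∀ l : G.Path, G.d l = G.d μ ⊔ G.d ν →
      (∃ β, G.s ν = G.r β ∧ G.comp ν β = l) →
      ∃ α, G.s μ = G.r α ∧ G.comp μ α = l := by
    intro l hd hβ
    refine G.key hrf hs.symm (fun S hS hv => (hsim S hS (by rw [hs]; exact hv)).symm)
      (by rw [hd, sup_comm]) hβ
  constructor
  · ext l
    constructor
    · rintro ⟨h1, h2, h3⟩
      exact ⟨h1, h2⟩
    · rintro ⟨h1, h2⟩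
      exact ⟨h1, h2, kd l h1 h2⟩
  · ext l
    constructor
    · rintro ⟨h1, h2, h3⟩
      exact ⟨h1, h3⟩
    · rintro ⟨h1, h2⟩
      exact ⟨h1, kd' l h1 h2, h2⟩
end

section
/- Let Λ be a row-finite k-graph with no sources, let c be a T-valued 2-cocycle on Λ, and let t be a Cuntz–Krieger (Λ,c)-family in a C*-algebra (i.e. a Toeplitz–Cuntz–Krieger (Λ,c)-family with Σ_{λ ∈ vΛ^n} t_λ t_λ* = t_v for all v ∈ Λ^0 and n ∈ ℕ^k). If μ, ν ∈ Λ satisfy s(μ) = s(ν) and μ ∼ ν, then t_μ t_μ* = t_ν t_ν*. -/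
open scoped BigOperators

namespace KGraph

variable {k : ℕ} (G : KGraph k)

lemma aux_vertex_s (l : G.Path) : G.s (G.s l) = G.s l := G.s_of_vertex _ (G.d_s l)
lemma aux_vertex_r_s (l : G.Path) : G.r (G.s l) = G.s l := G.r_of_vertex _ (G.d_s l)
lemma aux_vertex_s_r (l : G.Path) : G.s (G.r l) = G.r l := G.s_of_vertex _ (G.d_r l)

/-- Uniqueness of prefixes of a given degree. -/
lemma aux_prefix_unique {z p p' a a' : G.Path} (hp : G.s p = G.r a) (hpz : G.comp p a = z)
    (hp' : G.s p' = G.r a') (hpz' : G.comp p' a' = z) (hd : G.d p = G.d p') : p = p' := by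
  have h1 : G.d z = G.d p + G.d a := by rw [← hpz]; exact G.d_comp p a hp
  obtain ⟨q, _, huniq⟩ := G.factor z (G.d p) (G.d a) h1
  have e1 : (p, a) = q := huniq (p, a) ⟨rfl, rfl, hp, hpz⟩
  have hda : G.d a' = G.d a := by
    have h2 : G.d z = G.d p' + G.d a' := by rw [← hpz']; exact G.d_comp p' a' hp'
    funext j
    have c1 := congrFun h1 j
    have c2 := congrFun h2 j
    have c3 := congrFun hd j
    simp only [Pi.add_apply] at c1 c2
    omega
  have e2 : (p', a') = q := huniq (p', a') ⟨hd.symm, hda, hp', hpz'⟩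
  exact congrArg Prod.fst (e1.trans e2.symm)

/-- The degree-`m` prefix of `comp x a` factors through `x` when `d x ≤ m`. -/
lemma aux_thru (x a : G.Path) (hxa : G.s x = G.r a) (m : Fin k → ℕ)
    (h1 : ∀ j, G.d x j ≤ m j) (h2 : ∀ j, m j ≤ G.d (G.comp x a) j) :
    ∃ p c, (∃ b, G.s x = G.r b ∧ G.comp x b = p) ∧ G.d p = m ∧
      G.s p = G.r c ∧ G.comp p c = G.comp x a := by
  have hda : G.d a = (fun j => m j - G.d x j) + (fun j => G.d (G.comp x a) j - m j) := by
    have hz := G.d_comp x a hxa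
    funext j
    have c1 := congrFun hz j
    have c2 := h1 j
    have c3 := h2 j
    simp only [Pi.add_apply] at c1 ⊢
    omega
  obtain ⟨⟨a1, a2⟩, ⟨hd1, hd2, hs12, hcomp⟩, _⟩ := G.factor a _ _ hda
  have hra1 : G.r a1 = G.r a := by rw [← hcomp]; exact (G.r_comp a1 a2 hs12).symm
  have hxa1 : G.s x = G.r a1 := by rw [hra1]; exact hxa
  refine ⟨G.comp x a1, a2, ⟨a1, hxa1, rfl⟩, ?_, ?_, ?_⟩
  · rw [G.d_comp x a1 hxa1, hd1]
    funext j
    simp only [Pi.add_apply]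
    have := h1 j
    omega
  · rw [G.s_comp x a1 hxa1]; exact hs12
  · rw [G.comp_assoc x a1 a2 hxa1 hs12, hcomp]

/-- Every prefix has degree bounded by the degree of the whole path. -/
lemma aux_prefix_d_le {x b z : G.Path} (hxb : G.s x = G.r b) (hz : G.comp x b = z) :
    ∀ j, G.d x j ≤ G.d z j := by
  intro j
  have := congrFun (G.d_comp x b hxb) j
  rw [hz] at this
  simp only [Pi.add_apply] at this
  omega

/-- Transitivity of the prefix relation. -/
lemma aux_prefix_trans {x b w c z : G.Path} (hxb : G.s x = G.r b) (hw : G.comp x b = w)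
    (hwc : G.s w = G.r c) (hz : G.comp w c = z) :
    ∃ e, G.s x = G.r e ∧ G.comp x e = z := by
  have hbc : G.s b = G.r c := by
    rw [← hwc, ← hw, G.s_comp x b hxb]
  refine ⟨G.comp b c, ?_, ?_⟩
  · rw [G.r_comp b c hbc]; exact hxb
  · rw [← G.comp_assoc x b c hxb hbc, hw, hz]

/-- The tail sequence used to build an ultrafilter through a given path. -/
noncomputable def aux_seq (hrf : G.RowFiniteNoSources) (l : G.Path) : ℕ → G.Path
  | 0 => l
  | (i + 1) =>
      G.comp (aux_seq hrf l i)
        ((hrf (G.s (aux_seq hrf l i)) (G.d_s _) 1).2.some)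

lemma aux_seq_spec (hrf : G.RowFiniteNoSources) (l : G.Path) (i : ℕ) :
    G.s (G.aux_seq hrf l i) = G.r ((hrf (G.s (G.aux_seq hrf l i)) (G.d_s _) 1).2.some) ∧
    G.d ((hrf (G.s (G.aux_seq hrf l i)) (G.d_s _) 1).2.some) = 1 := by
  have h := (hrf (G.s (G.aux_seq hrf l i)) (G.d_s _) 1).2.some_mem
  exact ⟨h.1.symm, h.2⟩

lemma aux_seq_d (hrf : G.RowFiniteNoSources) (l : G.Path) (i : ℕ) :
    G.d (G.aux_seq hrf l i) = fun j => G.d l j + i := by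
  induction i with
  | zero => funext j; simp [aux_seq]
  | succ i ih =>
      obtain ⟨h1, h2⟩ := G.aux_seq_spec hrf l i
      funext j
      show G.d (G.aux_seq hrf l (i + 1)) j = _
      simp only [aux_seq]
      rw [G.d_comp _ _ h1, h2]
      simp only [Pi.add_apply, Pi.one_apply]
      rw [ih]
      rfl

lemma aux_seq_prefix (hrf : G.RowFiniteNoSources) (l : G.Path) {i i' : ℕ} (h : i ≤ i') :
    ∃ a, G.s (G.aux_seq hrf l i) = G.r a ∧
      G.comp (G.aux_seq hrf l i) a = G.aux_seq hrf l i' := by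
  induction i' with
  | zero =>
      have : i = 0 := Nat.le_zero.mp h
      subst this
      exact ⟨G.s (G.aux_seq hrf l 0), (G.aux_vertex_r_s _).symm, G.comp_id _⟩
  | succ i' ih =>
      rcases Nat.lt_or_ge i (i' + 1) with hlt | hge
      · obtain ⟨a, ha1, ha2⟩ := ih (Nat.lt_succ_iff.mp hlt)
        obtain ⟨h1, _⟩ := G.aux_seq_spec hrf l i'
        exact G.aux_prefix_trans ha1 ha2 h1 (by simp only [aux_seq])
      · have : i = i' + 1 := le_antisymm h hge
        subst this
        exact ⟨G.s (G.aux_seq hrf l (i' + 1)), (G.aux_vertex_r_s _).symm, G.comp_id _⟩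

/-- Through every path there is an ultrafilter. -/
lemma aux_ultrafilter_through (hrf : G.RowFiniteNoSources) (l : G.Path) :
    ∃ S, G.IsUltrafilter S ∧ l ∈ S := by
  classical
  set S : Set G.Path :=
    {x | ∃ i b, G.s x = G.r b ∧ G.comp x b = G.aux_seq hrf l i} with hS
  have hmemS : ∀ {x : G.Path} (i : ℕ), (∃ b, G.s x = G.r b ∧
      G.comp x b = G.aux_seq hrf l i) → x ∈ S := by
    intro x i hb
    exact ⟨i, hb⟩
  have hlS : l ∈ S := ⟨0, G.s l, (G.aux_vertex_r_s l).symm, G.comp_id l⟩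
  refine ⟨S, ⟨⟨?_, ?_⟩, ?_⟩, hlS⟩
  · -- F1
    rintro x ⟨α, hxα, i, b, hb1, hb2⟩
    rw [G.s_comp x α hxα] at hb1
    refine ⟨i, G.comp α b, ?_, ?_⟩
    · rw [G.r_comp α b hb1]; exact hxα
    · rw [← G.comp_assoc x α b hxα hb1, hb2]
  · -- F2
    rintro x ⟨i, b, hb1, hb2⟩ y ⟨i', b', hb1', hb2'⟩
    set j := max i i' with hj
    obtain ⟨e1, he1, he2⟩ := G.aux_seq_prefix hrf l (le_max_left i i')
    obtain ⟨e1', he1', he2'⟩ := G.aux_seq_prefix hrf l (le_max_right i i')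
    obtain ⟨bx, hbx1, hbx2⟩ := G.aux_prefix_trans hb1 hb2 he1 he2
    obtain ⟨by', hby1, hby2⟩ := G.aux_prefix_trans hb1' hb2' he1' he2'
    set m := G.d x ⊔ G.d y with hm
    have hmj : ∀ j', m j' = max (G.d x j') (G.d y j') := fun j' => rfl
    have hmz : ∀ j', m j' ≤ G.d (G.comp x bx) j' := by
      intro j'
      rw [hbx2]
      have hdx := G.aux_prefix_d_le hbx1 hbx2 j'
      have hdy := G.aux_prefix_d_le hby1 hby2 j'
      rw [hmj]; omega
    obtain ⟨p, c, ⟨bp, hbp1, hbp2⟩, hdp, hpc, hpz⟩ :=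
      G.aux_thru x bx hbx1 m (fun j' => by rw [hmj]; omega) hmz
    have hmz' : ∀ j', m j' ≤ G.d (G.comp y by') j' := by
      intro j'; rw [hby2, ← hbx2]; exact hmz j'
    obtain ⟨p', c', ⟨bp', hbp1', hbp2'⟩, hdp', hpc', hpz'⟩ :=
      G.aux_thru y by' hby1 m (fun j' => by rw [hmj]; omega) hmz'
    have hpp' : p = p' := by
      apply G.aux_prefix_unique hpc hpz hpc' ?_ (hdp.trans hdp'.symm)
      rw [hpz', hby2, ← hbx2]
    refine ⟨p, ⟨hdp, ⟨bp, hbp1, hbp2⟩, ⟨bp', hbp1', by rw [hbp2', hpp']⟩⟩, ?_⟩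
    refine hmemS j ⟨c, hpc, ?_⟩
    rw [hpz, hbx2]
  · -- ultra
    intro n
    set i := ∑ j', n j' with hi
    have hni : ∀ j', n j' ≤ i := by
      intro j'
      exact Finset.single_le_sum (f := n) (fun _ _ => Nat.zero_le _) (Finset.mem_univ j')
    set z := G.aux_seq hrf l i with hz
    have hdz : ∀ j', n j' ≤ G.d z j' := by
      intro j'
      rw [hz, G.aux_seq_d hrf l i]
      exact le_trans (hni j') (Nat.le_add_left _ _)
    have hc : G.comp (G.r z) z = z := G.id_comp z
    obtain ⟨p, c, _, hdp, hpc, hpz⟩ :=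
      G.aux_thru (G.r z) z (G.aux_vertex_s_r z) n
        (fun j' => by rw [G.d_r]; exact Nat.zero_le _)
        (fun j' => by rw [hc]; exact hdz j')
    rw [hc] at hpz
    exact ⟨p, hmemS i ⟨c, hpc, hpz⟩, hdp⟩

section CStarAux

variable {A : Type*} [NonUnitalNormedRing A] [StarRing A] [CStarRing A]
  [NormedSpace ℂ A] [IsScalarTower ℂ A A] [SMulCommClass ℂ A A]
  [StarModule ℂ A] [CompleteSpace A]

/-- Key half of statement 15: `q_ν q_μ = q_μ` when `μ ∼ ν`. -/
lemma aux_key (hrf : G.RowFiniteNoSources) (σ : G.Cocycle)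
    (t : G.Path → A) (ht : G.IsCKrf σ t)
    (μ ν : G.Path) (hs : G.s μ = G.s ν) (hsim : G.PEquiv μ ν) :
    (t ν * star (t ν)) * (t μ * star (t μ)) = t μ * star (t μ) := by
  classical
  obtain ⟨⟨hproj, horth, hmul, hstar, hmce⟩, hck⟩ := ht
  -- scalar facts
  have hc1 : ∀ x y, G.s x = G.r y → σ.c x y * star (σ.c x y) = (1 : ℂ) := by
    intro x y h
    have h0 := σ.norm_one x y h
    rw [Complex.star_def, Complex.mul_conj]
    norm_cast
    rw [Complex.normSq_eq_norm_sq, h0]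
    norm_num
  -- Step A: every `μλ` with `d λ = d ν` factors through `ν`.
  have extend : ∀ l, G.r l = G.s μ → G.d l = G.d ν →
      ∃ β, G.s ν = G.r β ∧ G.comp ν β = G.comp μ l := by
    intro l hl hdl
    obtain ⟨S, hS, hlS⟩ := G.aux_ultrafilter_through hrf l
    have hvS : G.s μ ∈ S := by
      apply hS.1.1 (G.s μ)
      refine ⟨l, ?_, ?_⟩
      · rw [G.aux_vertex_s μ, ← hl]
      · have : G.comp (G.s μ) l = l := by rw [← hl]; exact G.id_comp l
        rw [this]; exact hlS
    have hν : ν ∈ G.lmap ν S := by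
      refine ⟨G.s ν, by rw [← hs]; exact hvS, (G.aux_vertex_r_s ν).symm,
        G.s ν, (G.aux_vertex_r_s ν).symm, rfl⟩
    rw [← hsim S hS hvS] at hν
    obtain ⟨τ, hτS, hsμτ, α, hsνα, hcompeq⟩ := hν
    obtain ⟨e, ⟨hde, ⟨δ, hlδ, hlδe⟩, ⟨γ, hτγ, hτγe⟩⟩, heS⟩ := hS.1.2 l hlS τ hτS
    have hsαγ : G.s α = G.r γ := by
      have e1 : G.s (G.comp ν α) = G.s α := G.s_comp ν α hsνα
      have e2 : G.s (G.comp μ τ) = G.s τ := G.s_comp μ τ hsμτ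
      rw [hcompeq, e2] at e1
      rw [← e1]; exact hτγ
    have hμl : G.s μ = G.r l := hl.symm
    have hz1 : G.comp (G.comp μ l) δ = G.comp ν (G.comp α γ) := by
      have s1 : G.comp (G.comp μ l) δ = G.comp μ e := by
        rw [G.comp_assoc μ l δ hμl hlδ, hlδe]
      have s2 : G.comp μ e = G.comp ν (G.comp α γ) := by
        rw [← hτγe, ← G.comp_assoc μ τ γ hsμτ hτγ, ← hcompeq,
          G.comp_assoc ν α γ hsνα hsαγ]
      rw [s1, s2]
    have hsμlδ : G.s (G.comp μ l) = G.r δ := by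
      rw [G.s_comp μ l hμl]; exact hlδ
    have hsναγ : G.s ν = G.r (G.comp α γ) := by
      rw [G.r_comp α γ hsαγ]; exact hsνα
    set m := G.d (G.comp μ l) with hm
    have hdm : ∀ j, G.d ν j ≤ m j := by
      intro j
      rw [hm, G.d_comp μ l hμl, hdl]
      simp only [Pi.add_apply]
      omega
    have hmz : ∀ j, m j ≤ G.d (G.comp ν (G.comp α γ)) j := by
      intro j
      rw [← hz1]
      exact G.aux_prefix_d_le (x := G.comp μ l) hsμlδ rfl j
    obtain ⟨p, c, ⟨b, hνb, hcompνb⟩, hdp, hpc, hcompz⟩ :=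
      G.aux_thru ν (G.comp α γ) hsναγ m hdm hmz
    have hpeq : p = G.comp μ l :=
      G.aux_prefix_unique hpc hcompz hsμlδ hz1 (by rw [hdp])
    exact ⟨b, hνb, by rw [hcompνb, hpeq]⟩
  -- algebra helpers
  have e2ν : t ν * t (G.s ν) = t ν := by
    rw [hmul ν (G.s ν) (G.aux_vertex_r_s ν).symm, σ.right_id, G.comp_id, one_smul]
  have e2μ : t μ * t (G.s μ) = t μ := by
    rw [hmul μ (G.s μ) (G.aux_vertex_r_s μ).symm, σ.right_id, G.comp_id, one_smul]
  have key1 : ∀ l, G.s μ = G.r l →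
      t μ * ((t l * star (t l)) * star (t μ)) =
        t (G.comp μ l) * star (t (G.comp μ l)) := by
    intro l hr
    calc t μ * ((t l * star (t l)) * star (t μ))
        = (t μ * t l) * (star (t l) * star (t μ)) := by simp only [mul_assoc]
      _ = (t μ * t l) * star (t μ * t l) := by rw [star_mul]
      _ = (σ.c μ l • t (G.comp μ l)) * star (σ.c μ l • t (G.comp μ l)) := by
            rw [hmul μ l hr]
      _ = (σ.c μ l • t (G.comp μ l)) * (star (σ.c μ l) • star (t (G.comp μ l))) := by
            rw [star_smul]
      _ = (σ.c μ l * star (σ.c μ l)) • (t (G.comp μ l) * star (t (G.comp μ l))) := by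
            rw [smul_mul_assoc, mul_smul_comm, smul_smul]
      _ = t (G.comp μ l) * star (t (G.comp μ l)) := by rw [hc1 μ l hr, one_smul]
  have key2 : ∀ β, G.s ν = G.r β →
      (t ν * star (t ν)) * (t (G.comp ν β) * star (t (G.comp ν β))) =
        t (G.comp ν β) * star (t (G.comp ν β)) := by
    intro β hβ
    have hT : t (G.comp ν β) = star (σ.c ν β) • (t ν * t β) := by
      rw [hmul ν β hβ, smul_smul, mul_comm (star (σ.c ν β)) (σ.c ν β),
        hc1 ν β hβ, one_smul]
    have e2 : t ν * star (t ν) * t ν = t ν := by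
      rw [mul_assoc, hstar ν, e2ν]
    have hqt : (t ν * star (t ν)) * t (G.comp ν β) = t (G.comp ν β) := by
      calc (t ν * star (t ν)) * t (G.comp ν β)
          = (t ν * star (t ν)) * (star (σ.c ν β) • (t ν * t β)) := by rw [← hT]
        _ = star (σ.c ν β) • ((t ν * star (t ν)) * (t ν * t β)) :=
            mul_smul_comm _ _ _
        _ = star (σ.c ν β) • ((t ν * star (t ν) * t ν) * t β) := by
            rw [← mul_assoc]
        _ = star (σ.c ν β) • (t ν * t β) := by rw [e2]
        _ = t (G.comp ν β) := hT.symm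
    rw [← mul_assoc, hqt]
  -- CK sum
  have hv : G.IsVertex (G.s μ) := G.d_s μ
  set F : Finset G.Path := (hrf (G.s μ) hv (G.d ν)).1.toFinset with hF
  have hFcoe : (F : Set G.Path) = {l | G.r l = G.s μ ∧ G.d l = G.d ν} :=
    Set.Finite.coe_toFinset _
  have hFmem : ∀ l ∈ F, G.r l = G.s μ ∧ G.d l = G.d ν := by
    intro l hl
    have : l ∈ (F : Set G.Path) := hl
    rw [hFcoe] at this
    exact this
  have hsum : ∑ l ∈ F, t l * star (t l) = t (G.s μ) :=
    hck (G.s μ) (G.d ν) F hv hFcoe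
  have hmu : t μ * star (t μ) =
      ∑ l ∈ F, t (G.comp μ l) * star (t (G.comp μ l)) := by
    calc t μ * star (t μ)
        = (t μ * t (G.s μ)) * star (t μ) := by rw [e2μ]
      _ = t μ * ((∑ l ∈ F, t l * star (t l)) * star (t μ)) := by
            rw [hsum, mul_assoc]
      _ = ∑ l ∈ F, t μ * ((t l * star (t l)) * star (t μ)) := by
            rw [Finset.sum_mul, Finset.mul_sum]
      _ = ∑ l ∈ F, t (G.comp μ l) * star (t (G.comp μ l)) :=
            Finset.sum_congr rfl (fun l hl => key1 l (hFmem l hl).1.symm)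
  calc (t ν * star (t ν)) * (t μ * star (t μ))
      = ∑ l ∈ F, (t ν * star (t ν)) * (t (G.comp μ l) * star (t (G.comp μ l))) := by
        rw [hmu, Finset.mul_sum]
    _ = ∑ l ∈ F, t (G.comp μ l) * star (t (G.comp μ l)) := by
        refine Finset.sum_congr rfl (fun l hl => ?_)
        obtain ⟨hr, hd⟩ := hFmem l hl
        obtain ⟨β, hβ, hβc⟩ := extend l hr hd
        rw [← hβc]
        exact key2 β hβ
    _ = t μ * star (t μ) := hmu.symm

end CStarAux

end KGraph

/-- for a Cuntz–Krieger family on a row-finite `k`-graph with no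
sources, `μ ∼ ν` implies `t_μ t_μ* = t_ν t_ν*`. -/
theorem stmt15 {k : ℕ} (G : KGraph k) (hrf : G.RowFiniteNoSources) (σ : G.Cocycle)
    {A : Type*} [NonUnitalNormedRing A] [StarRing A] [CStarRing A]
    [NormedSpace ℂ A] [IsScalarTower ℂ A A] [SMulCommClass ℂ A A]
    [StarModule ℂ A] [CompleteSpace A]
    (t : G.Path → A) (ht : G.IsCKrf σ t)
    (μ ν : G.Path) (hs : G.s μ = G.s ν) (hsim : G.PEquiv μ ν) :
    t μ * star (t μ) = t ν * star (t ν) := by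
  have h1 := G.aux_key hrf σ t ht μ ν hs hsim
  have h2 := G.aux_key hrf σ t ht ν μ hs.symm
    (fun S hS hmem => (hsim S hS (by rw [hs]; exact hmem)).symm)
  have sμs : star (t μ * star (t μ)) = t μ * star (t μ) := by
    rw [star_mul, star_star]
  have sνs : star (t ν * star (t ν)) = t ν * star (t ν) := by
    rw [star_mul, star_star]
  have h4 : (t ν * star (t ν)) * (t μ * star (t μ)) = t ν * star (t ν) := by
    have h5 := congrArg star h2
    rwa [star_mul, sμs, sνs] at h5
  rw [← h1, h4]
end
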